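/- arXiv:1905.01117 — 8 statements merged into one kernel-verified Lean document; each statement's English description precedes it below -/
import Mathlib

section
/- Let X be a complex Hilbert space and H₀ : D(H₀) ⊆ X → X a densely defined, closed, skew-symmetric operator (⟨H₀x, y⟩ = −⟨x, H₀y⟩ for all x, y ∈ D(H₀)). Let G₁, G₂ be complex Hilbert spaces and F : Graph(H₀*) → G₁ ⊕ G₂ a surjective linear map, written F(x, H₀*x) = (F₁x, F₂x), such that ⟨x, H₀*y⟩_X + ⟨H₀*x, y⟩_X = ⟨F₁x, F₁y⟩_{G₁} − ⟨F₂x, F₂y⟩_{G₂} for all x, y ∈ D(H₀*). Then a linear operator H with −H₀ ⊆ H ⊆ H₀* is maximal dissipative if and only if there exists a linear contraction T : G₂ → G₁ (i.e., ‖Tz‖_{G₁} ≤ ‖z‖_{G₂} for all z) such that D(H) = {x ∈ D(H₀*) : F₁x = T F₂x}. -/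
open scoped InnerProductSpace ComplexConjugate

variable {X : Type*} [NormedAddCommGroup X] [InnerProductSpace ℂ X] [CompleteSpace X]

/-- A (partially defined) linear operator `H` in a complex Hilbert space is *dissipative*
if `Re ⟪H x, x⟫ ≤ 0` for all `x` in its domain. -/
def IsDissipative (H : X →ₗ.[ℂ] X) : Prop :=
  ∀ x : H.domain, (⟪H x, (x : X)⟫_ℂ).re ≤ 0

/-- A dissipative operator is *maximal dissipative* if every dissipative extension of it
coincides with it. -/
def IsMaximalDissipative (H : X →ₗ.[ℂ] X) : Prop :=
  IsDissipative H ∧ ∀ K : X →ₗ.[ℂ] X, IsDissipative K → H ≤ K → K = H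

/-- Auxiliary: a complex number whose multiples have uniformly bounded real part is zero. -/
lemma aux_re_bdd_eq_zero (w : ℂ) (C : ℝ) (h : ∀ t : ℂ, (t * w).re ≤ C) : w = 0 := by
  by_contra hw
  have hn : 0 < Complex.normSq w := Complex.normSq_pos.mpr hw
  have hC : ∀ s : ℝ, 0 < s → s * Complex.normSq w ≤ C := by
    intro s hs
    have := h ((s : ℂ) * conj w)
    rw [mul_assoc, mul_comm (conj w) w, Complex.mul_conj] at this
    simpa using this
  rcases le_or_gt (C + 1) 0 with h0 | h0
  · have := hC 1 one_pos; linarith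
  · have := hC ((C + 1) / Complex.normSq w) (by positivity)
    rw [div_mul_cancel₀] at this
    · linarith
    · exact ne_of_gt hn

/-- Auxiliary: any dissipative extension of `-H₀`, with `H₀` densely defined and
skew-symmetric, is a restriction of the adjoint of `H₀`. -/
lemma aux_diss_ext_le_adjoint (H₀ : X →ₗ.[ℂ] X) (hdense : Dense (H₀.domain : Set X))
    (hskew : ∀ x y : H₀.domain, ⟪H₀ x, (y : X)⟫_ℂ = -⟪(x : X), H₀ y⟫_ℂ)
    (K : X →ₗ.[ℂ] X) (hKd : ∀ x : K.domain, (⟪K x, (x : X)⟫_ℂ).re ≤ 0)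
    (hK0 : -H₀ ≤ K) : K ≤ H₀.adjoint := by
  have claim : ∀ x : K.domain, ∀ v : H₀.domain, ⟪K x, (v : X)⟫_ℂ = ⟪(x : X), H₀ v⟫_ℂ := by
    intro x v
    set a := ⟪K x, (v : X)⟫_ℂ with ha
    set b := ⟪H₀ v, (x : X)⟫_ℂ with hb
    have hrec : (⟪H₀ v, (v : X)⟫_ℂ).re = 0 := by
      have h1 := hskew v v
      have h2 : ⟪(v : X), H₀ v⟫_ℂ = conj ⟪H₀ v, (v : X)⟫_ℂ := (inner_conj_symm _ _).symm
      rw [h2] at h1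
      have := congrArg Complex.re h1
      rw [Complex.neg_re, Complex.conj_re] at this
      linarith
    set vK : K.domain := ⟨(v : X), hK0.1 v.2⟩ with hvK
    have hKvK : K vK = -(H₀ v) := by
      have := hK0.2 (x := ⟨(v : X), v.2⟩) (y := vK) rfl
      rw [LinearPMap.neg_apply] at this
      exact this.symm
    have hw : a - conj b = 0 := by
      apply aux_re_bdd_eq_zero _ (-(⟪K x, (x : X)⟫_ℂ).re)
      intro t
      have hd := hKd (x + t • vK)
      have hKu : K (x + t • vK) = K x + t • (-(H₀ v)) := by
        rw [K.map_add, K.map_smul, hKvK]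
      have hcu : ((x + t • vK : K.domain) : X) = (x : X) + t • (v : X) := rfl
      rw [hKu, hcu, inner_add_left, inner_add_right, inner_add_right,
        inner_smul_left, inner_smul_right, inner_smul_left, inner_smul_right,
        inner_neg_left, inner_neg_left] at hd
      have hre : (t * (a - conj b)).re = (t * a).re + (conj t * (-b)).re := by
        have h3 : (conj t * (-b)).re = (conj (conj t * (-b))).re := (Complex.conj_re _).symm
        rw [h3, map_mul, Complex.conj_conj, map_neg, mul_sub, Complex.sub_re, mul_neg,
          Complex.neg_re]
        ring
      have hlast : (conj t * (t * -⟪H₀ v, (v : X)⟫_ℂ)).re = 0 := by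
        rw [← mul_assoc, mul_comm (conj t) t, Complex.mul_conj, Complex.re_ofReal_mul,
          Complex.neg_re, hrec]
        ring
      rw [Complex.add_re, Complex.add_re, Complex.add_re] at hd
      linarith [hd, hre, hlast]
    rw [sub_eq_zero] at hw
    rw [hw]
    exact inner_conj_symm _ _
  refine ⟨fun u hu => ?_, fun u y huy => ?_⟩
  · exact LinearPMap.mem_adjoint_domain_of_exists _ ⟨K ⟨u, hu⟩, fun v => claim ⟨u, hu⟩ v⟩
  · exact (LinearPMap.adjoint_apply_eq hdense _ (fun v => huy ▸ claim u v)).symm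

set_option maxHeartbeats 2000000 in
/-- **classification of maximal dissipative extensions via boundary systems.**
Let `H₀` be a densely defined, closed, skew-symmetric operator in a complex Hilbert space
`X`, let `G₁, G₂` be complex Hilbert spaces and let `F = (F₁, F₂)` be a surjective linear
map on the graph of `H₀*` (identified with the domain of `H₀*`) satisfying the boundary
system identity
`⟪x, H₀* y⟫ + ⟪H₀* x, y⟫ = ⟪F₁ x, F₁ y⟫ − ⟪F₂ x, F₂ y⟫`.
Then a linear operator `H` with `−H₀ ⊆ H ⊆ H₀*` is maximal dissipative if and only if
there is a linear contraction `T : G₂ → G₁` with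
`D(H) = {x ∈ D(H₀*) : F₁ x = T (F₂ x)}`. -/
theorem stmt_0 {G₁ G₂ : Type*}
    [NormedAddCommGroup G₁] [InnerProductSpace ℂ G₁] [CompleteSpace G₁]
    [NormedAddCommGroup G₂] [InnerProductSpace ℂ G₂] [CompleteSpace G₂]
    (H₀ : X →ₗ.[ℂ] X) (hdense : Dense (H₀.domain : Set X)) (hclosed : H₀.IsClosed)
    (hskew : ∀ x y : H₀.domain, ⟪H₀ x, (y : X)⟫_ℂ = -⟪(x : X), H₀ y⟫_ℂ)
    (F₁ : H₀.adjoint.domain →ₗ[ℂ] G₁) (F₂ : H₀.adjoint.domain →ₗ[ℂ] G₂)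
    (hsurj : Function.Surjective fun x : H₀.adjoint.domain => (F₁ x, F₂ x))
    (hbs : ∀ x y : H₀.adjoint.domain,
      ⟪(x : X), H₀.adjoint y⟫_ℂ + ⟪H₀.adjoint x, (y : X)⟫_ℂ
        = ⟪F₁ x, F₁ y⟫_ℂ - ⟪F₂ x, F₂ y⟫_ℂ)
    (H : X →ₗ.[ℂ] X) (hext : -H₀ ≤ H) (hrest : H ≤ H₀.adjoint) :
    IsMaximalDissipative H ↔
      ∃ T : G₂ →ₗ[ℂ] G₁, (∀ z : G₂, ‖T z‖ ≤ ‖z‖) ∧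
        ∀ u : X, u ∈ H.domain ↔
          ∃ hu : u ∈ H₀.adjoint.domain, F₁ ⟨u, hu⟩ = T (F₂ ⟨u, hu⟩) := by
  -- the fundamental quadratic identity
  have key : ∀ x : H₀.adjoint.domain,
      2 * (⟪H₀.adjoint x, (x : X)⟫_ℂ).re = ‖F₁ x‖ ^ 2 - ‖F₂ x‖ ^ 2 := by
    intro x
    have h := congrArg (RCLike.re (K := ℂ)) (hbs x x)
    rw [map_add, map_sub, inner_self_eq_norm_sq, inner_self_eq_norm_sq,
      inner_re_symm (𝕜 := ℂ)] at h
    rw [RCLike.re_to_complex] at h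
    linarith
  constructor
  · -- maximal dissipative → boundary condition by a contraction
    rintro ⟨hdiss, hmax⟩
    set ι : H.domain →ₗ[ℂ] H₀.adjoint.domain := Submodule.inclusion hrest.1 with hι
    set Φ : H.domain →ₗ[ℂ] G₁ := F₁.comp ι with hΦ
    set Ψ : H.domain →ₗ[ℂ] G₂ := F₂.comp ι with hΨ
    have hcon : ∀ x : H.domain, ‖Φ x‖ ≤ ‖Ψ x‖ := by
      intro x
      have hx : H x = H₀.adjoint (ι x) := hrest.2 rfl
      have hk : 2 * (⟪H₀.adjoint (ι x), ((x : X))⟫_ℂ).re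
          = ‖F₁ (ι x)‖ ^ 2 - ‖F₂ (ι x)‖ ^ 2 := key (ι x)
      have hd := hdiss x
      rw [hx] at hd
      have hΦx : Φ x = F₁ (ι x) := rfl
      have hΨx : Ψ x = F₂ (ι x) := rfl
      rw [hΦx, hΨx]
      nlinarith [norm_nonneg (F₁ (ι x)), norm_nonneg (F₂ (ι x))]
    have hker : LinearMap.ker Ψ ≤ LinearMap.ker Φ := by
      intro x hx
      rw [LinearMap.mem_ker] at hx ⊢
      have h := hcon x
      rw [hx, norm_zero] at h
      exact norm_le_zero_iff.mp h
    set M : Submodule ℂ G₂ := LinearMap.range Ψ with hM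
    set N : Submodule ℂ G₂ := M.topologicalClosure with hN
    set T₀ : M →ₗ[ℂ] G₁ :=
      ((LinearMap.ker Ψ).liftQ Φ hker).comp Ψ.quotKerEquivRange.symm.toLinearMap with hT₀def
    have hT₀ : ∀ (x : H.domain) (h : Ψ x ∈ M), T₀ ⟨Ψ x, h⟩ = Φ x := by
      intro x h
      have h2 : Ψ.quotKerEquivRange.symm ⟨Ψ x, h⟩ = (LinearMap.ker Ψ).mkQ x :=
        LinearMap.quotKerEquivRange_symm_apply_image Ψ x h
      rw [hT₀def]
      simp only [LinearMap.comp_apply, LinearEquiv.coe_coe, h2, Submodule.mkQ_apply,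
        Submodule.liftQ_apply]
    have hT₀n : ∀ z : M, ‖T₀ z‖ ≤ 1 * ‖z‖ := by
      rintro ⟨z, hz⟩
      obtain ⟨x, hx⟩ := hz
      have hzz : (⟨z, ⟨x, hx⟩⟩ : M) = ⟨Ψ x, LinearMap.mem_range_self Ψ x⟩ :=
        Subtype.ext hx.symm
      rw [hzz, hT₀ x _, one_mul]
      have : ‖(⟨Ψ x, LinearMap.mem_range_self Ψ x⟩ : M)‖ = ‖Ψ x‖ := rfl
      rw [this]
      exact hcon x
    set T₀c : M →L[ℂ] G₁ := T₀.mkContinuous 1 hT₀n with hT₀c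
    set e : M →L[ℂ] N :=
      (Submodule.inclusion M.le_topologicalClosure).mkContinuous 1
        (fun z => by rw [one_mul]; exact le_of_eq rfl) with he
    have h_e : ∀ z : M, ‖z‖ ≤ (1 : NNReal) * ‖e z‖ := by
      intro z
      rw [NNReal.coe_one, one_mul]
      exact le_of_eq rfl
    have h_dense : DenseRange e := by
      have hr : Set.range (⇑e) = Subtype.val ⁻¹' (M : Set G₂) := by
        ext y
        constructor
        · rintro ⟨z, rfl⟩; exact z.2
        · intro hy; exact ⟨⟨(y : G₂), hy⟩, Subtype.ext rfl⟩
      rw [DenseRange, hr]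
      intro y
      rw [closure_subtype, Set.image_preimage_eq_inter_range, Subtype.range_val,
        Set.inter_eq_self_of_subset_left (SetLike.coe_subset_coe.mpr M.le_topologicalClosure)]
      exact (Submodule.topologicalClosure_coe M) ▸ y.2
    have hNc : IsClosed (N : Set G₂) := M.isClosed_topologicalClosure
    haveI : CompleteSpace N := hNc.completeSpace_coe
    set Text := T₀c.extend e with hText
    have hTextn : ‖Text‖ ≤ 1 := by
      have h1 := ContinuousLinearMap.opNorm_extend_le T₀c h_dense h_e
      have h2 : ‖T₀c‖ ≤ 1 := LinearMap.mkContinuous_norm_le T₀ zero_le_one hT₀n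
      calc ‖Text‖ ≤ (1 : NNReal) * ‖T₀c‖ := h1
        _ ≤ 1 := by rw [NNReal.coe_one, one_mul]; exact h2
    set P := N.orthogonalProjectionOnto with hP
    set Tl : G₂ →ₗ[ℂ] G₁ := (Text.comp (P : G₂ →L[ℂ] N)).toLinearMap with hTl
    have hTcon : ∀ z : G₂, ‖Tl z‖ ≤ ‖z‖ := by
      intro z
      have h1 : Tl z = Text (P z) := rfl
      rw [h1]
      calc ‖Text (P z)‖ ≤ ‖Text‖ * ‖P z‖ := Text.le_opNorm _
        _ ≤ 1 * ‖P z‖ := mul_le_mul_of_nonneg_right hTextn (norm_nonneg _)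
        _ = ‖P z‖ := one_mul _
        _ ≤ ‖N.orthogonalProjectionOnto‖ * ‖z‖ := (N.orthogonalProjectionOnto).le_opNorm z
        _ ≤ 1 * ‖z‖ := mul_le_mul_of_nonneg_right (N.orthogonalProjectionOnto_norm_le) (norm_nonneg z)
        _ = ‖z‖ := one_mul _
    have hagree : ∀ x : H.domain, Tl (Ψ x) = Φ x := by
      intro x
      have hmem : Ψ x ∈ N := M.le_topologicalClosure (LinearMap.mem_range_self Ψ x)
      have h1 : P (Ψ x) = ⟨Ψ x, hmem⟩ :=
        Submodule.orthogonalProjectionOnto_mem_subspace_eq_self (⟨Ψ x, hmem⟩ : N)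
      have h2 : (⟨Ψ x, hmem⟩ : N) = e ⟨Ψ x, LinearMap.mem_range_self Ψ x⟩ := Subtype.ext rfl
      have h3 : Text (e ⟨Ψ x, LinearMap.mem_range_self Ψ x⟩)
          = T₀c ⟨Ψ x, LinearMap.mem_range_self Ψ x⟩ :=
        ContinuousLinearMap.extend_eq T₀c h_dense
          (ContinuousLinearMap.isUniformEmbedding_of_bound e h_e).isUniformInducing _
      have h4 : T₀c ⟨Ψ x, LinearMap.mem_range_self Ψ x⟩ = Φ x := hT₀ x _
      show Text (P (Ψ x)) = Φ x
      rw [h1, h2, h3, h4]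
    set V : Submodule ℂ X :=
      (LinearMap.ker (F₁ - Tl.comp F₂)).map H₀.adjoint.domain.subtype with hV
    have hVA : V ≤ H₀.adjoint.domain := Submodule.map_subtype_le _ _
    have hVmem : ∀ u : X, u ∈ V ↔
        ∃ hu : u ∈ H₀.adjoint.domain, F₁ ⟨u, hu⟩ = Tl (F₂ ⟨u, hu⟩) := by
      intro u
      constructor
      · rintro ⟨w, hw, rfl⟩
        refine ⟨w.2, ?_⟩
        have hw2 : F₁ w - Tl (F₂ w) = 0 := hw
        exact sub_eq_zero.mp hw2
      · rintro ⟨hu, hF⟩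
        refine ⟨⟨u, hu⟩, ?_, rfl⟩
        show F₁ ⟨u, hu⟩ - Tl (F₂ ⟨u, hu⟩) = 0
        exact sub_eq_zero.mpr hF
    set H' : X →ₗ.[ℂ] X := H₀.adjoint.domRestrict V with hH'
    have hH'dom : ∀ u : X, u ∈ H'.domain ↔ u ∈ V := by
      intro u
      rw [hH', LinearPMap.domRestrict_domain, inf_eq_left.mpr hVA]
    have hH'val : ∀ (x : H'.domain) (y : H₀.adjoint.domain), ((x : X) = (y : X)) →
        H' x = H₀.adjoint y := by
      intro x y hxy
      exact LinearPMap.domRestrict_apply hxy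
    have hH'diss : IsDissipative H' := by
      intro x
      have hx2 : (x : X) ∈ V := (hH'dom _).mp x.2
      obtain ⟨hu, hF⟩ := (hVmem _).mp hx2
      set y : H₀.adjoint.domain := ⟨(x : X), hu⟩ with hy
      rw [hH'val x y rfl]
      have hk : 2 * (⟪H₀.adjoint y, ((x : X))⟫_ℂ).re = ‖F₁ y‖ ^ 2 - ‖F₂ y‖ ^ 2 := key y
      nlinarith [hTcon (F₂ y), norm_nonneg (F₂ y), norm_nonneg (Tl (F₂ y)), hF ▸ hk]
    have hle : H ≤ H' := by
      refine ⟨fun u hu => ?_, fun u w huw => ?_⟩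
      · have h1 : u ∈ V := (hVmem u).mpr ⟨hrest.1 hu, (hagree ⟨u, hu⟩).symm⟩
        exact (hH'dom u).mpr h1
      · have h1 : H u = H₀.adjoint ⟨(u : X), hrest.1 u.2⟩ := hrest.2 rfl
        have h2 : H' w = H₀.adjoint ⟨(u : X), hrest.1 u.2⟩ := hH'val w _ huw.symm
        rw [h1, ← h2]
    have hfin := hmax H' hH'diss hle
    refine ⟨Tl, hTcon, fun u => ?_⟩
    rw [← hfin, hH'dom u, hVmem u]
  · -- boundary condition by a contraction → maximal dissipative
    rintro ⟨T, hT, hdom⟩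
    constructor
    · intro x
      obtain ⟨hu, hF⟩ := (hdom (x : X)).mp x.2
      set x' : H₀.adjoint.domain := ⟨(x : X), hu⟩ with hx'
      have hx : H x = H₀.adjoint x' := hrest.2 rfl
      have hk : 2 * (⟪H₀.adjoint x', ((x : X))⟫_ℂ).re = ‖F₁ x'‖ ^ 2 - ‖F₂ x'‖ ^ 2 := key x'
      have hF' : F₁ x' = T (F₂ x') := hF
      rw [hx]
      nlinarith [hT (F₂ x'), norm_nonneg (F₂ x'), norm_nonneg (T (F₂ x')), hF' ▸ hk]
    · intro K hKdiss hHK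
      have hK0 : -H₀ ≤ K := le_trans hext hHK
      have hKA : K ≤ H₀.adjoint := aux_diss_ext_le_adjoint H₀ hdense hskew K hKdiss hK0
      have hdomK : K.domain ≤ H.domain := by
        intro u hu
        set x' : H₀.adjoint.domain := ⟨u, hKA.1 hu⟩ with hx'
        obtain ⟨y', hy'⟩ := hsurj (T (-(F₂ x')), -(F₂ x'))
        have hy1 : F₁ y' = T (-(F₂ x')) := congrArg Prod.fst hy'
        have hy2 : F₂ y' = -(F₂ x') := congrArg Prod.snd hy'
        have hyH : (y' : X) ∈ H.domain := (hdom _).mpr ⟨y'.2, by rw [hy1, hy2]⟩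
        set z : K.domain := ⟨u, hu⟩ + ⟨(y' : X), hHK.1 hyH⟩ with hz
        have hzA : K z = H₀.adjoint (x' + y') := hKA.2 rfl
        have hd := hKdiss z
        rw [hzA] at hd
        have hk : 2 * (⟪H₀.adjoint (x' + y'), ((z : X))⟫_ℂ).re
            = ‖F₁ (x' + y')‖ ^ 2 - ‖F₂ (x' + y')‖ ^ 2 := key (x' + y')
        have h2 : F₂ (x' + y') = 0 := by rw [map_add, hy2]; simp
        have h1 : F₁ x' + F₁ y' = 0 := by
          rw [h2, map_add] at hk
          simp only [norm_zero] at hk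
          have hn : ‖F₁ x' + F₁ y'‖ ^ 2 ≤ 0 := by linarith
          have : ‖F₁ x' + F₁ y'‖ = 0 := by nlinarith [norm_nonneg (F₁ x' + F₁ y')]
          rwa [norm_eq_zero] at this
        have hfin : F₁ x' = T (F₂ x') := by
          have h3 : F₁ x' = -F₁ y' := by rwa [add_eq_zero_iff_eq_neg] at h1
          rw [h3, hy1, map_neg, neg_neg]
        exact (hdom u).mpr ⟨hKA.1 hu, hfin⟩
      refine LinearPMap.eq_of_le_of_domain_eq ⟨hdomK, fun u w huw => ?_⟩
        (le_antisymm hdomK hHK.1)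
      have h1 : K u = H₀.adjoint ⟨(w : X), hrest.1 w.2⟩ := hKA.2 huw
      have h2 : H w = H₀.adjoint ⟨(w : X), hrest.1 w.2⟩ := hrest.2 rfl
      rw [h1, ← h2]
end

section
/- Let X be a complex Hilbert space and H : D(H) ⊆ X → X a linear, densely defined, maximal dissipative operator. If (x, y) ∈ X × X satisfies Re⟨x − u, y − Hu⟩ ≤ 0 for all u ∈ D(H), then x ∈ D(H) and y = Hx. -/
open scoped InnerProductSpace

variable {X : Type*} [NormedAddCommGroup X] [InnerProductSpace ℂ X] [CompleteSpace X]

/-- If `H` is a linear, densely defined, maximal dissipative operator in a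
complex Hilbert space `X` and `(x, y) ∈ X × X` satisfies `Re ⟪x − u, y − H u⟫ ≤ 0` for all
`u ∈ D(H)`, then `x ∈ D(H)` and `y = H x`. -/
theorem stmt_1 (H : X →ₗ.[ℂ] X) (hdense : Dense (H.domain : Set X))
    (hmax : IsMaximalDissipative H) (x y : X)
    (hxy : ∀ u : H.domain, (⟪x - (u : X), y - H u⟫_ℂ).re ≤ 0) :
    ∃ hx : x ∈ H.domain, H ⟨x, hx⟩ = y := by
  -- Step 1: x ∈ H.domain
  have hx : x ∈ H.domain := by
    by_contra hx'
    set K := H.supSpanSingleton x y hx' with hKdef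
    have hle : H ≤ K := LinearPMap.left_le_sup _ _ _
    have hK : IsDissipative K := by
      intro w
      have hw : (w : X) ∈ H.domain ⊔ ℂ ∙ x := w.2
      rcases Submodule.mem_sup.1 hw with ⟨u, hu, zx, hzx, hsum⟩
      rcases Submodule.mem_span_singleton.1 hzx with ⟨c, rfl⟩
      have hwmem : u + c • x ∈ K.domain :=
        Submodule.mem_sup.2 ⟨u, hu, _, Submodule.mem_span_singleton.2 ⟨c, rfl⟩, rfl⟩
      have hw_eq : w = ⟨u + c • x, hwmem⟩ := Subtype.ext hsum.symm
      rw [hw_eq]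
      have happ : K ⟨u + c • x, hwmem⟩ = H ⟨u, hu⟩ + c • y :=
        H.supSpanSingleton_apply_mk x y hx' u hu c
      rw [happ]
      rcases eq_or_ne c 0 with rfl | hc
      · simpa using hmax.1 ⟨u, hu⟩
      · set v : H.domain := (-(c⁻¹)) • ⟨u, hu⟩ with hv
        have hvx : (v : X) = (-(c⁻¹)) • u := rfl
        have hHv : H v = (-(c⁻¹)) • H ⟨u, hu⟩ := H.toFun.map_smul _ _
        have e1 : H ⟨u, hu⟩ + c • y = c • (y - H v) := by
          rw [hHv]; rw [smul_sub, smul_smul]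
          rw [mul_neg, mul_inv_cancel₀ hc, neg_smul, one_smul, sub_neg_eq_add, add_comm]
        have e2 : u + c • x = c • (x - (v : X)) := by
          rw [hvx, smul_sub, smul_smul]
          rw [mul_neg, mul_inv_cancel₀ hc, neg_smul, one_smul, sub_neg_eq_add, add_comm]
        have hcoe : ((⟨u + c • x, hwmem⟩ : K.domain) : X) = u + c • x := rfl
        rw [hcoe, e1, e2, inner_smul_left, inner_smul_right, ← mul_assoc,
          ← Complex.normSq_eq_conj_mul_self]
        have h1 : (⟪x - (v : X), y - H v⟫_ℂ).re ≤ 0 := hxy v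
        have h2 : (⟪y - H v, x - (v : X)⟫_ℂ).re ≤ 0 := by
          rw [← inner_conj_symm, Complex.conj_re]; exact h1
        have hnn : (0:ℝ) ≤ Complex.normSq c := Complex.normSq_nonneg c
        calc ((((Complex.normSq c : ℂ)) * ⟪y - H v, x - (v:X)⟫_ℂ).re)
            = Complex.normSq c * (⟪y - H v, x - (v:X)⟫_ℂ).re := by
              rw [Complex.re_ofReal_mul]
          _ ≤ 0 := mul_nonpos_of_nonneg_of_nonpos hnn h2
    have hKH : K = H := hmax.2 K hK hle
    have hxK : x ∈ K.domain := by
      refine Submodule.mem_sup.2 ⟨0, H.domain.zero_mem, x,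
        Submodule.mem_span_singleton_self x, by simp⟩
    rw [hKH] at hxK
    exact hx' hxK
  -- Step 2: H ⟨x, hx⟩ = y
  refine ⟨hx, ?_⟩
  set xd : H.domain := ⟨x, hx⟩ with hxd
  set z : X := y - H xd with hz
  have key : ∀ v : H.domain, (⟪(v : X), z⟫_ℂ).re ≤ 0 := by
    intro v
    set C : ℝ := (⟪(v : X), H v⟫_ℂ).re with hC
    have hbound : ∀ t : ℝ, 0 < t → (⟪(v : X), z⟫_ℂ).re ≤ t * (-C) := by
      intro t ht
      have hu := hxy (xd - (t : ℂ) • v)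
      have hcoe : ((xd - (t : ℂ) • v : H.domain) : X) = x - (t : ℂ) • (v : X) := rfl
      have hH : H (xd - (t : ℂ) • v) = H xd - (t : ℂ) • H v := by
        rw [H.map_sub, H.map_smul]
      rw [hcoe, hH] at hu
      have e3 : x - (x - (t : ℂ) • (v : X)) = (t : ℂ) • (v : X) := sub_sub_cancel _ _
      have e4 : y - (H xd - (t : ℂ) • H v) = z + (t : ℂ) • H v := by
        rw [hz]; abel
      rw [e3, e4] at hu
      rw [inner_smul_left, inner_add_right, inner_smul_right] at hu
      have hre : ((starRingEnd ℂ) (t:ℂ) * (⟪(v:X), z⟫_ℂ + (t:ℂ) * ⟪(v:X), H v⟫_ℂ)).re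
          = t * ((⟪(v:X), z⟫_ℂ).re + t * C) := by
        rw [Complex.conj_ofReal, Complex.re_ofReal_mul, Complex.add_re,
          Complex.re_ofReal_mul, hC]
      rw [hre] at hu
      have := nonpos_of_mul_nonpos_right hu ht
      -- this : (⟪v,z⟫).re + t * C ≤ 0
      linarith [mul_pos ht ht]
    have htend : Filter.Tendsto (fun t : ℝ => t * (-C)) (nhdsWithin 0 (Set.Ioi 0)) (nhds 0) := by
      have h : Filter.Tendsto (fun t : ℝ => t * (-C)) (nhds 0) (nhds (0 * (-C))) :=
        (continuous_id.mul continuous_const).tendsto (0 : ℝ)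
      simpa using h.mono_left nhdsWithin_le_nhds
    exact ge_of_tendsto htend
      (Filter.eventually_of_mem self_mem_nhdsWithin fun t ht => hbound t ht)
  have horth : ∀ v : H.domain, ⟪(v : X), z⟫_ℂ = 0 := by
    intro v
    have h1 := key v
    have h2 := key (-v)
    have h3 := key ((Complex.I) • v)
    have h4 := key ((-Complex.I) • v)
    have hc2 : ((-v : H.domain) : X) = -(v : X) := rfl
    have hc3 : (((Complex.I) • v : H.domain) : X) = Complex.I • (v : X) := rfl
    have hc4 : (((-Complex.I) • v : H.domain) : X) = (-Complex.I) • (v : X) := rfl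
    rw [hc2, inner_neg_left] at h2
    rw [hc3, inner_smul_left] at h3
    rw [hc4, inner_smul_left] at h4
    simp only [Complex.neg_re, map_neg, neg_mul, Complex.conj_I] at h2 h3 h4
    have hre : (⟪(v : X), z⟫_ℂ).re = 0 := le_antisymm h1 (by linarith)
    have him : (⟪(v : X), z⟫_ℂ).im = 0 := by
      have e4 : (Complex.I * ⟪(v : X), z⟫_ℂ).re = -(⟪(v : X), z⟫_ℂ).im := by
        simp [Complex.mul_re]
      rw [e4] at h3 h4
      linarith
    exact Complex.ext hre him
  have hz0 : z = 0 := hdense.eq_zero_of_inner_right ℂ fun v hv => horth ⟨v, hv⟩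
  rw [hz] at hz0
  exact (sub_eq_zero.mp hz0).symm
end

section
/- (Minty's theorem for linear operators) Let X be a complex Hilbert space and H : D(H) ⊆ X → X linear, densely defined and dissipative. Then H is maximal dissipative if and only if 1 − H is onto, i.e., for every y ∈ X there exists x ∈ D(H) with x − Hx = y. -/
set_option linter.unusedSectionVars false


open scoped InnerProductSpace

variable {X : Type*} [NormedAddCommGroup X] [InnerProductSpace ℂ X] [CompleteSpace X]

namespace MintyAux

open Complex

/-- The linear map `x ↦ x - H x` on the domain of `H`. -/
noncomputable def g (H : X →ₗ.[ℂ] X) : H.domain →ₗ[ℂ] X :=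
  H.domain.subtype - H.toFun

lemma g_apply (H : X →ₗ.[ℂ] X) (x : H.domain) : g H x = (x : X) - H x := rfl

lemma key_re (H : X →ₗ.[ℂ] X) (hdiss : IsDissipative H) (x : H.domain) :
    ‖(x : X)‖ ^ 2 ≤ (⟪(x : X) - H x, (x : X)⟫_ℂ).re := by
  have h := hdiss x
  rw [inner_sub_left, Complex.sub_re]
  have h2 : (⟪(x : X), (x : X)⟫_ℂ).re = ‖(x : X)‖ ^ 2 := by
    simpa using inner_self_eq_norm_sq (𝕜 := ℂ) ((x : X))
  linarith

lemma key_norm (H : X →ₗ.[ℂ] X) (hdiss : IsDissipative H) (x : H.domain) :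
    ‖(x : X)‖ ≤ ‖(x : X) - H x‖ := by
  have h1 := key_re H hdiss x
  have h2 : (⟪(x : X) - H x, (x : X)⟫_ℂ).re ≤ ‖(x : X) - H x‖ * ‖(x : X)‖ :=
    by exact re_inner_le_norm (𝕜 := ℂ) ((x : X) - H x) ((x : X))
  rcases eq_or_lt_of_le (norm_nonneg (x : X)) with h0 | h0
  · rw [← h0]; exact norm_nonneg _
  · have := h1.trans h2
    rw [pow_two] at this
    exact le_of_mul_le_mul_right (by linarith) h0

/-- The easy direction: surjectivity of `1 - H` implies maximality. -/
lemma max_of_surj (H : X →ₗ.[ℂ] X) (hdiss : IsDissipative H)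
    (hsurj : ∀ y : X, ∃ x : H.domain, (x : X) - H x = y) : IsMaximalDissipative H := by
  refine ⟨hdiss, fun K hK hHK => ?_⟩
  have hdom : K.domain = H.domain := by
    refine le_antisymm (fun x hx => ?_) hHK.1
    set u : K.domain := ⟨x, hx⟩
    obtain ⟨x', hx'⟩ := hsurj ((x : X) - K u)
    have hx'K : (x' : X) ∈ K.domain := hHK.1 x'.2
    set u' : K.domain := ⟨(x' : X), hx'K⟩
    have hKH : K u' = H x' := (hHK.2 rfl).symm
    have hw : ((u - u' : K.domain) : X) - K (u - u') = 0 := by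
      have hcoe : ((u - u' : K.domain) : X) = x - (x' : X) := by
        simp [u, u']
      rw [hcoe, LinearPMap.map_sub, hKH, sub_sub_sub_comm, ← hx', sub_self]
    have h1 := key_re K hK (u - u')
    rw [hw, inner_zero_left] at h1
    have h2 : ((u - u' : K.domain) : X) = 0 := by
      have := pow_eq_zero_iff (n := 2) (by norm_num) |>.mp
        (le_antisymm (by simpa only [Complex.zero_re] using h1) (by positivity))
      simpa using this
    have : (x : X) = (x' : X) := by
      have : ((u : X) - (u' : X)) = 0 := by simpa using h2
      have := sub_eq_zero.mp this
      exact this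
    rw [this]
    exact x'.2
  exact (LinearPMap.eq_of_le_of_domain_eq hHK hdom.symm).symm

lemma orth_zero (H : X →ₗ.[ℂ] X) (hdiss : IsDissipative H)
    (hmax : IsMaximalDissipative H) (z : X)
    (hz : ∀ x : H.domain, ⟪(x : X) - H x, z⟫_ℂ = 0) : z = 0 := by
  by_contra hz0
  -- z is not in the domain
  have hznD : z ∉ H.domain := by
    intro hmem
    have h1 := key_re H hdiss ⟨z, hmem⟩
    rw [hz ⟨z, hmem⟩] at h1
    simp only [Complex.zero_re] at h1
    have h2 : ‖z‖ ^ 2 = 0 := le_antisymm h1 (by positivity)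
    have h3 : ‖z‖ = 0 := by
      have := pow_eq_zero_iff (n := 2) (by norm_num) |>.mp h2
      exact this
    exact hz0 (norm_eq_zero.mp h3)
  set K : X →ₗ.[ℂ] X := H.supSpanSingleton z (-z) hznD with hKdef
  have hHK : H ≤ K := LinearPMap.left_le_sup _ _ _
  have hKdiss : IsDissipative K := by
    intro u
    have hu : (u : X) ∈ H.domain ⊔ (ℂ ∙ z) := u.2
    rcases Submodule.mem_sup.1 hu with ⟨a, ha, b, hb, hab⟩
    rcases Submodule.mem_span_singleton.1 hb with ⟨c, rfl⟩
    have hue : u = ⟨a + c • z, hab ▸ u.2⟩ := Subtype.ext hab.symm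
    rw [hue]
    rw [LinearPMap.supSpanSingleton_apply_mk H z (-z) hznD a ha c]
    -- now compute the real part
    have horth := hz ⟨a, ha⟩
    rw [inner_sub_left, sub_eq_zero] at horth
    -- horth : ⟪a, z⟫ = ⟪H ⟨a,ha⟩, z⟫
    have hdis := hdiss ⟨a, ha⟩
    set A := (⟪H ⟨a, ha⟩, (a : X)⟫_ℂ) with hA
    set p := (⟪(a : X), z⟫_ℂ) with hp
    have hHz : ⟪H ⟨a, ha⟩, z⟫_ℂ = p := horth.symm
    have hza : ⟪z, (a : X)⟫_ℂ = starRingEnd ℂ p := by rw [hp, inner_conj_symm]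
    have expand : ⟪H ⟨a, ha⟩ + c • (-z), ((⟨a + c • z, hab ▸ u.2⟩ : K.domain) : X)⟫_ℂ
        = A + (c * p - starRingEnd ℂ (c * p)) - starRingEnd ℂ c * c * ⟪z, z⟫_ℂ := by
      push_cast
      rw [inner_add_left, inner_add_right, inner_add_right, inner_smul_left, inner_smul_left,
        inner_smul_right, inner_smul_right, inner_neg_left, inner_neg_left, hHz, hza]
      rw [map_mul]
      ring
    rw [RingHom.id_apply, expand]
    have h1 : (c * p - starRingEnd ℂ (c * p)).re = 0 := by
      simp [Complex.sub_re]
    have h2 : (starRingEnd ℂ c * c * ⟪z, z⟫_ℂ).re = Complex.normSq c * ‖z‖ ^ 2 := by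
      rw [show (starRingEnd ℂ c * c) = (Complex.normSq c : ℂ) by
        rw [mul_comm, Complex.mul_conj]]
      rw [Complex.re_ofReal_mul]
      congr 1
      simpa using inner_self_eq_norm_sq (𝕜 := ℂ) z
    rw [Complex.sub_re, Complex.add_re, h1, h2]
    have : Complex.normSq c * ‖z‖ ^ 2 ≥ 0 :=
      mul_nonneg (Complex.normSq_nonneg c) (by positivity)
    linarith
  have hKH := hmax.2 K hKdiss hHK
  have hzK : z ∈ K.domain := by
    rw [hKdef, LinearPMap.domain_supSpanSingleton]
    exact Submodule.mem_sup_right (Submodule.mem_span_singleton_self z)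
  rw [hKH] at hzK
  exact hznD hzK

lemma surj_of_max (H : X →ₗ.[ℂ] X) (hdense : Dense (H.domain : Set X))
    (hdiss : IsDissipative H) (hmax : IsMaximalDissipative H) :
    ∀ y : X, ∃ x : H.domain, (x : X) - H x = y := by
  classical
  set R : Submodule ℂ X := LinearMap.range (g H) with hR
  -- the range of `1 - H` is dense
  have hRdense : Dense (R : Set X) := by
    rw [Submodule.dense_iff_topologicalClosure_eq_top,
      Submodule.topologicalClosure_eq_top_iff]
    rw [Submodule.eq_bot_iff]
    intro z hzo
    refine orth_zero H hdiss hmax z fun x => ?_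
    have := (Submodule.mem_orthogonal R z).mp hzo (g H x) (LinearMap.mem_range_self _ x)
    rwa [g_apply] at this
  -- `g H` is injective
  have ginj : Function.Injective (g H) := by
    intro a b hab
    have h0 : g H (a - b) = 0 := by rw [map_sub, hab, sub_self]
    have h1 := key_norm H hdiss (a - b)
    rw [← g_apply, h0, norm_zero] at h1
    have : ((a - b : H.domain) : X) = 0 := norm_le_zero_iff.mp h1
    have : (a : X) = b := by
      rw [← sub_eq_zero]; simpa using this
    exact Subtype.ext this
  -- the bounded inverse on the range
  set e : H.domain ≃ₗ[ℂ] R := LinearEquiv.ofInjective (g H) ginj with he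
  have he_apply : ∀ x : H.domain, ((e x : X)) = g H x := fun x => rfl
  set S₀ : R →ₗ[ℂ] X := H.domain.subtype.comp e.symm.toLinearMap with hS₀
  have hS₀_bound : ∀ v : R, ‖S₀ v‖ ≤ 1 * ‖v‖ := by
    intro v
    have hv : g H (e.symm v) = (v : X) := by
      conv_rhs => rw [← e.apply_symm_apply v]
      exact (he_apply _).symm
    have : S₀ v = ((e.symm v : H.domain) : X) := rfl
    rw [this, one_mul]
    calc ‖((e.symm v : H.domain) : X)‖ ≤ ‖((e.symm v : H.domain) : X) - H (e.symm v)‖ :=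
          key_norm H hdiss _
      _ = ‖(v : X)‖ := by rw [← g_apply, hv]
  set S : R →L[ℂ] X := S₀.mkContinuous 1 hS₀_bound with hS
  -- extend to all of X
  have h_e : IsUniformInducing (R.subtypeL : R →L[ℂ] X) :=
    isometry_subtype_coe.isUniformInducing
  have h_dense : DenseRange (R.subtypeL : R →L[ℂ] X) := by
    show Dense (Set.range (Subtype.val : R → X))
    rw [Subtype.range_coe]
    exact hRdense
  set T : X →L[ℂ] X := S.extend R.subtypeL with hT
  have hText : ∀ v : R, T (v : X) = S v := fun v =>
    ContinuousLinearMap.extend_eq S h_dense h_e v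
  have hTg : ∀ x : H.domain, T (g H x) = (x : X) := by
    intro x
    have hmem : g H x ∈ R := LinearMap.mem_range_self _ x
    have h1 : T (g H x) = S ⟨g H x, hmem⟩ := hText ⟨g H x, hmem⟩
    rw [h1]
    have h2 : S ⟨g H x, hmem⟩ = ((e.symm ⟨g H x, hmem⟩ : H.domain) : X) := rfl
    rw [h2]
    have h3 : e x = ⟨g H x, hmem⟩ := Subtype.ext (he_apply x)
    rw [← h3, e.symm_apply_apply]
  -- key inequality for T, by density
  have hTkey : ∀ y : X, ‖T y‖ ^ 2 ≤ (⟪y, T y⟫_ℂ).re := by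
    intro y
    have hclosed : IsClosed {v : X | ‖T v‖ ^ 2 ≤ (⟪v, T v⟫_ℂ).re} := by
      apply isClosed_le
      · exact (T.continuous.norm.pow 2)
      · exact Complex.continuous_re.comp (continuous_id.inner T.continuous)
    have hsub : (R : Set X) ⊆ {v : X | ‖T v‖ ^ 2 ≤ (⟪v, T v⟫_ℂ).re} := by
      rintro v ⟨x, rfl⟩
      have h1 : T (g H x) = (x : X) := hTg x
      simp only [Set.mem_setOf_eq, h1]
      have := key_re H hdiss x
      rwa [← g_apply] at this
    have := closure_minimal hsub hclosed (hRdense y)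
    exact this
  -- injectivity of T
  have hTzero : ∀ y : X, T y = 0 → y = 0 := by
    intro y hy
    have hre : ∀ u : H.domain, 0 ≤ (⟪y, (u : X)⟫_ℂ).re := by
      intro u
      have hstep : ∀ t : ℝ, 0 < t → t * (⟪H u, (u : X)⟫_ℂ).re ≤ (⟪y, (u : X)⟫_ℂ).re := by
        intro t ht
        -- by density, a closed condition
        have hclosed : IsClosed {v : X |
            (⟪(T v - v) + (t : ℂ) • H u, T v + (t : ℂ) • (u : X)⟫_ℂ).re ≤ 0} := by
          apply isClosed_le
          · apply Complex.continuous_re.comp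
            exact ((T.continuous.sub continuous_id).add continuous_const).inner
              (T.continuous.add continuous_const)
          · exact continuous_const
        have hsub : (R : Set X) ⊆ {v : X |
            (⟪(T v - v) + (t : ℂ) • H u, T v + (t : ℂ) • (u : X)⟫_ℂ).re ≤ 0} := by
          rintro v ⟨x, rfl⟩
          have h1 : T (g H x) = (x : X) := hTg x
          have h2 : (x : X) - g H x = H x := by rw [g_apply]; abel
          simp only [Set.mem_setOf_eq, h1, h2]
          -- this is dissipativity at x + t • u
          set w : H.domain := x + (t : ℂ) • u with hw
          have h3 : (⟪H w, (w : X)⟫_ℂ).re ≤ 0 := hdiss w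
          have h4 : H w = H x + (t : ℂ) • H u := by
            rw [hw, LinearPMap.map_add, LinearPMap.map_smul]
          have h5 : ((w : X)) = (x : X) + (t : ℂ) • (u : X) := by
            rw [hw]; push_cast; ring
          rwa [h4, h5] at h3
        have hy2 := closure_minimal hsub hclosed (hRdense y)
        simp only [Set.mem_setOf_eq, hy, zero_sub, zero_add] at hy2
        have hexp : (⟪-y + (t : ℂ) • H u, (t : ℂ) • (u : X)⟫_ℂ).re
            = t * (-(⟪y, (u : X)⟫_ℂ).re + t * (⟪H u, (u : X)⟫_ℂ).re) := by
          rw [inner_add_left, inner_smul_left, inner_smul_right, inner_smul_right,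
            inner_neg_left, Complex.conj_ofReal, Complex.add_re, Complex.re_ofReal_mul,
            Complex.re_ofReal_mul, Complex.re_ofReal_mul, Complex.neg_re]
          ring
        rw [hexp] at hy2
        have h6 : -(⟪y, (u : X)⟫_ℂ).re + t * (⟪H u, (u : X)⟫_ℂ).re ≤ 0 := by
          by_contra hA
          push_neg at hA
          nlinarith
        linarith
      by_contra hneg
      push_neg at hneg
      have ha := hdiss u
      have h1 := hstep 1 one_pos
      rw [one_mul] at h1
      have ha' : (⟪H u, (u : X)⟫_ℂ).re < 0 := lt_of_le_of_lt h1 hneg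
      set a := (⟪H u, (u : X)⟫_ℂ).re with hadef
      set r := (⟪y, (u : X)⟫_ℂ).re with hrdef
      have ht' : 0 < r / (2 * a) := div_pos_of_neg_of_neg hneg (by linarith)
      have h2 := hstep (r / (2 * a)) ht'
      have h3 : r / (2 * a) * a = r / 2 := by
        rw [div_mul_eq_mul_div, mul_comm r a, mul_comm 2 a,
          mul_div_mul_left r 2 (ne_of_lt ha')]
      rw [h3] at h2
      linarith
    have hall : ∀ u : H.domain, ⟪y, (u : X)⟫_ℂ = 0 := by
      intro u
      have h1 := hre u
      have h2 := hre (-u)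
      have h3 := hre (Complex.I • u)
      have h4 := hre ((-Complex.I) • u)
      have hc2 : ((-u : H.domain) : X) = -(u : X) := rfl
      have hc3 : ((Complex.I • u : H.domain) : X) = Complex.I • (u : X) := rfl
      have hc4 : (((-Complex.I) • u : H.domain) : X) = (-Complex.I) • (u : X) := rfl
      rw [hc2, inner_neg_right, Complex.neg_re] at h2
      rw [hc3, inner_smul_right, Complex.mul_re, Complex.I_re, Complex.I_im] at h3
      rw [hc4, inner_smul_right, Complex.mul_re, Complex.neg_re, Complex.neg_im,
        Complex.I_re, Complex.I_im] at h4
      apply Complex.ext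
      · simp only [Complex.zero_re]; linarith
      · simp only [Complex.zero_im]
        simp only [zero_mul, one_mul, zero_sub, neg_zero, neg_neg, neg_mul] at h3 h4
        linarith
    exact hdense.eq_zero_of_inner_left ℂ (fun v hv => hall ⟨v, hv⟩)
  -- build the graph extension
  set Φ : X →ₗ[ℂ] X × X :=
    LinearMap.prod (T : X →ₗ[ℂ] X) ((T : X →ₗ[ℂ] X) - LinearMap.id) with hΦ
  have hΦ_apply : ∀ w : X, Φ w = (T w, T w - w) := fun w => rfl
  set G : Submodule ℂ (X × X) := LinearMap.range Φ with hG
  have hGprop : ∀ p ∈ G, p.1 = 0 → p.2 = 0 := by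
    rintro p ⟨w, rfl⟩ hp1
    rw [hΦ_apply] at hp1 ⊢
    have h2 : w = 0 := hTzero w hp1
    simp [h2]
  set K : X →ₗ.[ℂ] X := G.toLinearPMap with hK
  have hgraph : K.graph = G := Submodule.toLinearPMap_graph_eq G hGprop
  have hHK : H ≤ K := by
    apply LinearPMap.le_of_le_graph
    rw [hgraph]
    intro p hp
    rw [LinearPMap.mem_graph_iff] at hp
    obtain ⟨xd, hx1, hx2⟩ := hp
    refine ⟨g H xd, ?_⟩
    have hT1 : T (g H xd) = (xd : X) := hTg xd
    have hT2 : T (g H xd) - g H xd = H xd := by rw [hT1, g_apply]; abel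
    rw [hΦ_apply, hT2, hT1]
    exact Prod.ext hx1 hx2
  have hKdiss : IsDissipative K := by
    intro u
    have hu : ((u : X), K u) ∈ K.graph := LinearPMap.mem_graph K u
    rw [hgraph] at hu
    obtain ⟨w, hw⟩ := hu
    rw [hΦ_apply] at hw
    have h1 : T w = (u : X) := congrArg Prod.fst hw
    have h2 : T w - w = K u := congrArg Prod.snd hw
    rw [← h1, ← h2, inner_sub_left, Complex.sub_re]
    have h3 : (⟪T w, T w⟫_ℂ).re = ‖T w‖ ^ 2 := by
      simpa using inner_self_eq_norm_sq (𝕜 := ℂ) (T w)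
    linarith [hTkey w]
  have hKH : K = H := hmax.2 K hKdiss hHK
  intro y
  have hy : Φ y ∈ G := LinearMap.mem_range_self _ y
  rw [← hgraph, hKH, LinearPMap.mem_graph_iff] at hy
  obtain ⟨x, hx1, hx2⟩ := hy
  refine ⟨x, ?_⟩
  have h1 : (Φ y).1 = T y := rfl
  have h2 : (Φ y).2 = T y - y := rfl
  rw [hx1, hx2, h1, h2]
  abel

end MintyAux

/-- **Minty's theorem for linear operators.** A linear, densely defined,
dissipative operator `H` in a complex Hilbert space is maximal dissipative if and only if
`1 − H` is onto. -/
theorem stmt_4 (H : X →ₗ.[ℂ] X) (hdense : Dense (H.domain : Set X))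
    (hdiss : IsDissipative H) :
    IsMaximalDissipative H ↔ ∀ y : X, ∃ x : H.domain, (x : X) - H x = y := by
  constructor
  · intro hmax
    exact MintyAux.surj_of_max H hdense hdiss hmax
  · intro hsurj
    exact MintyAux.max_of_surj H hdiss hsurj
end

section
/- Let X be a complex Hilbert space, 𝓗 ∈ L(X) a bounded self-adjoint operator with ⟨x, 𝓗x⟩ ≥ c‖x‖² for all x ∈ X and some c > 0, and let H : D(H) ⊆ X → X be linear. Then the following are equivalent: (i) H is densely defined and maximal dissipative in X; (ii) the operator H𝓗 (with domain {x ∈ X : 𝓗x ∈ D(H)}, x ↦ H(𝓗x)) is densely defined and maximal dissipative in the Hilbert space X_𝓗 = (X, ⟨·, 𝓗·⟩). -/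
open scoped InnerProductSpace

variable {X : Type*} [NormedAddCommGroup X] [InnerProductSpace ℂ X] [CompleteSpace X]

/-- Dissipativity with respect to the weighted inner product
`⟪u, v⟫_𝓗 := ⟪u, 𝓗 v⟫` of `X_𝓗`: `Re ⟪H x, x⟫_𝓗 = Re ⟪H x, 𝓗 x⟫ ≤ 0` on the domain. -/
def IsDissipativeWt (𝓗 : X →L[ℂ] X) (H : X →ₗ.[ℂ] X) : Prop :=
  ∀ x : H.domain, (⟪H x, 𝓗 (x : X)⟫_ℂ).re ≤ 0

/-- Maximal dissipativity in the weighted space `X_𝓗`. -/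
def IsMaximalDissipativeWt (𝓗 : X →L[ℂ] X) (H : X →ₗ.[ℂ] X) : Prop :=
  IsDissipativeWt 𝓗 H ∧ ∀ K : X →ₗ.[ℂ] X, IsDissipativeWt 𝓗 K → H ≤ K → K = H

/-- The operator `H𝓗` with domain `{x : 𝓗 x ∈ D(H)}`, acting by `x ↦ H (𝓗 x)`. -/
noncomputable def pmapComp (H : X →ₗ.[ℂ] X) (𝓗 : X →L[ℂ] X) : X →ₗ.[ℂ] X where
  domain := H.domain.comap (𝓗 : X →ₗ[ℂ] X)
  toFun := H.toFun.comp (((𝓗 : X →ₗ[ℂ] X)).restrict fun _ hx => hx)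

lemma pmapComp_domain (H : X →ₗ.[ℂ] X) (A : X →L[ℂ] X) :
    (pmapComp H A).domain = H.domain.comap (A : X →ₗ[ℂ] X) := rfl

lemma pmapComp_apply (H : X →ₗ.[ℂ] X) (A : X →L[ℂ] X) (x : (pmapComp H A).domain) :
    pmapComp H A x = H ⟨A (x : X), x.2⟩ := rfl

lemma pmapComp_mono {H K : X →ₗ.[ℂ] X} (A : X →L[ℂ] X) (h : H ≤ K) :
    pmapComp H A ≤ pmapComp K A := by
  constructor
  · intro x hx; exact h.1 hx
  · intro x y hxy
    rw [pmapComp_apply, pmapComp_apply]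
    exact h.2 (by simp [hxy])

lemma pmapComp_pmapComp (H : X →ₗ.[ℂ] X) (A B : X →L[ℂ] X)
    (hAB : ∀ x, A (B x) = x) : pmapComp (pmapComp H A) B = H := by
  apply LinearPMap.ext
  · ext x
    simp [pmapComp_domain, Submodule.mem_comap, hAB]
  · intro x y hxy
    rw [pmapComp_apply, pmapComp_apply]
    exact congrArg H (Subtype.ext (by simp [hAB, hxy]))

lemma diss_to_wt (A : X →L[ℂ] X) (T : X →ₗ.[ℂ] X) (h : IsDissipative T) :
    IsDissipativeWt A (pmapComp T A) := by
  intro x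
  rw [pmapComp_apply]
  exact h ⟨A (x : X), x.2⟩

lemma wt_to_diss (A B : X →L[ℂ] X) (hAB : ∀ x, A (B x) = x)
    (K : X →ₗ.[ℂ] X) (h : IsDissipativeWt A K) : IsDissipative (pmapComp K B) := by
  intro x
  rw [pmapComp_apply]
  have := h ⟨B (x : X), x.2⟩
  simpa [hAB] using this

set_option maxHeartbeats 800000 in
/-- Let `𝓗` be a bounded self-adjoint operator with `⟪x, 𝓗 x⟫ ≥ c ‖x‖²`
for some `c > 0` (a uniformly finite weight) and `H` a linear operator in `X`.  Then `H` is
densely defined and maximal dissipative in `X` if and only if `H𝓗` is densely defined and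
maximal dissipative in the weighted Hilbert space `X_𝓗 = (X, ⟪·, 𝓗 ·⟫)` (whose norm is
equivalent to that of `X`, so density may be expressed in `X`). -/
theorem stmt_5 (𝓗 : X →L[ℂ] X) (hsa : IsSelfAdjoint 𝓗)
    (c : ℝ) (hc : 0 < c) (hcoer : ∀ x : X, c * ‖x‖ ^ 2 ≤ (⟪x, 𝓗 x⟫_ℂ).re)
    (H : X →ₗ.[ℂ] X) :
    (Dense (H.domain : Set X) ∧ IsMaximalDissipative H) ↔
      (Dense ((pmapComp H 𝓗).domain : Set X) ∧ IsMaximalDissipativeWt 𝓗 (pmapComp H 𝓗)) := by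
  have hlow : ∀ x : X, ‖x‖ ≤ c⁻¹ * ‖𝓗 x‖ := by
    intro x
    rcases eq_or_ne x 0 with rfl | hx
    · simp
    · have h1 : c * ‖x‖ ^ 2 ≤ ‖x‖ * ‖𝓗 x‖ := by
        calc c * ‖x‖ ^ 2 ≤ (⟪x, 𝓗 x⟫_ℂ).re := hcoer x
          _ ≤ ‖⟪x, 𝓗 x⟫_ℂ‖ := Complex.re_le_norm _
          _ ≤ ‖x‖ * ‖𝓗 x‖ := norm_inner_le_norm _ _
      have hxpos : (0:ℝ) < ‖x‖ := norm_pos_iff.mpr hx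
      have h2 : c * ‖x‖ ≤ ‖𝓗 x‖ := by nlinarith
      calc ‖x‖ = c⁻¹ * (c * ‖x‖) := by field_simp
        _ ≤ c⁻¹ * ‖𝓗 x‖ := by
            exact mul_le_mul_of_nonneg_left h2 (inv_pos.mpr hc).le
  have hanti : AntilipschitzWith ⟨c⁻¹, (inv_pos.mpr hc).le⟩ 𝓗 :=
    AddMonoidHomClass.antilipschitz_of_bound _ (by exact hlow)
  have hker : LinearMap.ker (𝓗 : X →ₗ[ℂ] X) = ⊥ :=
    (LinearMap.ker_eq_bot (f := (𝓗 : X →ₗ[ℂ] X))).mpr hanti.injective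
  have hclosed : IsClosed (Set.range 𝓗) :=
    hanti.isClosed_range 𝓗.uniformContinuous
  have hrange : LinearMap.range (𝓗 : X →ₗ[ℂ] X) = ⊤ := by
    have horth : (LinearMap.range (𝓗 : X →ₗ[ℂ] X))ᗮ = ⊥ := by
      rw [Submodule.eq_bot_iff]
      intro y hy
      have h0 : ⟪𝓗 y, y⟫_ℂ = 0 :=
        (Submodule.mem_orthogonal _ _).mp hy (𝓗 y) (LinearMap.mem_range_self _ y)
      have h1 : c * ‖y‖ ^ 2 ≤ 0 := by
        have := hcoer y
        rwa [← inner_conj_symm, h0] at this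
      have h2 : ‖y‖ ^ 2 ≤ 0 := by nlinarith
      have h3 : ‖y‖ = 0 := by nlinarith [sq_nonneg ‖y‖, norm_nonneg y]
      simpa using h3
    have := (Submodule.topologicalClosure_eq_top_iff (K := LinearMap.range (𝓗 : X →ₗ[ℂ] X))).mpr horth
    rwa [IsClosed.submodule_topologicalClosure_eq (by exact hclosed)] at this
  have hsurj : Function.Surjective 𝓗 := LinearMap.range_eq_top.mp (by exact_mod_cast hrange)
  set e : X ≃L[ℂ] X := ContinuousLinearEquiv.ofBijective 𝓗 hker hrange with he
  have hecoe : ⇑e = ⇑𝓗 := ContinuousLinearEquiv.coeFn_ofBijective _ _ _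
  set B : X →L[ℂ] X := (e.symm : X →L[ℂ] X) with hB
  have hAB : ∀ x, 𝓗 (B x) = x := fun x => by
    rw [← hecoe]; exact e.apply_symm_apply x
  have hBA : ∀ x, B (𝓗 x) = x := fun x => by
    rw [← hecoe]; exact e.symm_apply_apply x
  have hset : ((pmapComp H 𝓗).domain : Set X) = ⇑𝓗 ⁻¹' (H.domain : Set X) := rfl
  have hdense_iff : Dense (H.domain : Set X) ↔ Dense ((pmapComp H 𝓗).domain : Set X) := by
    rw [hset]
    constructor
    · intro hd
      have hpe : ⇑𝓗 ⁻¹' (H.domain : Set X) = ⇑B '' (H.domain : Set X) := by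
        ext z
        constructor
        · intro hz
          exact ⟨𝓗 z, hz, hBA z⟩
        · rintro ⟨y, hy, rfl⟩
          simpa [Set.mem_preimage, hAB] using hy
      rw [hpe]
      exact (Function.Surjective.denseRange fun x => ⟨𝓗 x, hBA x⟩).dense_image
        B.continuous hd
    · intro hd
      have hpe : (H.domain : Set X) = ⇑𝓗 '' (⇑𝓗 ⁻¹' (H.domain : Set X)) :=
        (Set.image_preimage_eq _ hsurj).symm
      rw [hpe]
      exact hsurj.denseRange.dense_image 𝓗.continuous hd
  constructor
  · rintro ⟨hdense, hdiss, hmax⟩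
    refine ⟨hdense_iff.mp hdense, diss_to_wt 𝓗 H hdiss, ?_⟩
    intro K hK hle
    have hK' : IsDissipative (pmapComp K B) := wt_to_diss 𝓗 B hAB K hK
    have hle' : H ≤ pmapComp K B := by
      rw [← pmapComp_pmapComp H 𝓗 B hAB]
      exact pmapComp_mono B hle
    have heq := hmax _ hK' hle'
    calc K = pmapComp (pmapComp K B) 𝓗 := (pmapComp_pmapComp K B 𝓗 hBA).symm
      _ = pmapComp H 𝓗 := by rw [heq]
  · rintro ⟨hdense, hdiss, hmax⟩
    have hHdiss : IsDissipative H := by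
      have := wt_to_diss 𝓗 B hAB _ hdiss
      rwa [pmapComp_pmapComp H 𝓗 B hAB] at this
    refine ⟨hdense_iff.mpr hdense, hHdiss, ?_⟩
    intro K hK hle
    have heq := hmax _ (diss_to_wt 𝓗 K hK) (pmapComp_mono 𝓗 hle)
    calc K = pmapComp (pmapComp K 𝓗) B := (pmapComp_pmapComp K 𝓗 B hAB).symm
      _ = pmapComp (pmapComp H 𝓗) B := by rw [heq]
      _ = H := pmapComp_pmapComp H 𝓗 B hAB
end

section
/- Let X be a complex Hilbert space and 𝓗 a self-adjoint (possibly unbounded) operator in X. Assume there is an increasing sequence (Xₙ) of closed subspaces of X such that for each n: Xₙ ⊆ D(𝓗), 𝓗(Xₙ) ⊆ Xₙ, there is cₙ > 0 with ⟨y, 𝓗y⟩ ≥ cₙ‖y‖² for all y ∈ Xₙ, and the restriction of 𝓗 to ⋃ₙ Xₙ is essentially self-adjoint in X (in particular ⋃ₙ Xₙ is dense in X). Then 𝓗 is injective. -/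
open scoped InnerProductSpace

variable {X : Type*} [NormedAddCommGroup X] [InnerProductSpace ℂ X] [CompleteSpace X]

/-- Let `𝓗` be a (possibly unbounded) self-adjoint operator in a complex
Hilbert space `X`.  Assume there is an increasing sequence `(Xₙ)` of closed subspaces with
`Xₙ ⊆ D(𝓗)`, `𝓗(Xₙ) ⊆ Xₙ`, `⟪y, 𝓗 y⟫ ≥ cₙ ‖y‖²` on `Xₙ` for some `cₙ > 0`, such that the
restriction of `𝓗` to `⋃ₙ Xₙ` is essentially self-adjoint (in particular `⋃ₙ Xₙ` is dense).
Then `𝓗` is injective. -/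
theorem stmt_6 (𝓗 : X →ₗ.[ℂ] X) (hdense : Dense (𝓗.domain : Set X))
    (hsa : 𝓗.adjoint = 𝓗)
    (Xn : ℕ → Submodule ℂ X) (hmono : Monotone Xn)
    (hXnclosed : ∀ n, IsClosed ((Xn n : Submodule ℂ X) : Set X))
    (hsub : ∀ n, Xn n ≤ 𝓗.domain)
    (hinv : ∀ (n : ℕ) (x : 𝓗.domain), (x : X) ∈ Xn n → 𝓗 x ∈ Xn n)
    (hcoer : ∀ n : ℕ, ∃ c : ℝ, 0 < c ∧
      ∀ x : 𝓗.domain, (x : X) ∈ Xn n → c * ‖(x : X)‖ ^ 2 ≤ (⟪(x : X), 𝓗 x⟫_ℂ).re)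
    (hUdense : Dense (((⨆ n, Xn n : Submodule ℂ X)) : Set X))
    (hclosable : (𝓗.domRestrict (⨆ n, Xn n)).IsClosable)
    (hess : ((𝓗.domRestrict (⨆ n, Xn n)).closure).adjoint
      = (𝓗.domRestrict (⨆ n, Xn n)).closure) :
    ∀ x : 𝓗.domain, 𝓗 x = 0 → (x : X) = 0 := by
  intro x hx
  -- symmetry of 𝓗
  have hsymm : ∀ u v : 𝓗.domain, ⟪𝓗 u, (v : X)⟫_ℂ = ⟪(u : X), 𝓗 v⟫_ℂ := by
    have h := LinearPMap.adjoint_isFormalAdjoint (T := 𝓗) hdense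
    rw [hsa] at h
    exact h
  -- x is orthogonal to 𝓗 y for y in any Xn
  have hxperpH : ∀ y : 𝓗.domain, ⟪(x : X), 𝓗 y⟫_ℂ = 0 := by
    intro y
    rw [← hsymm, hx, inner_zero_left]
  -- x is orthogonal to each Xn
  have hxperp : ∀ n, ∀ w ∈ Xn n, ⟪(x : X), w⟫_ℂ = 0 := by
    intro n w hw
    haveI : CompleteSpace (Xn n) := (hXnclosed n).completeSpace_coe
    set z : X := ((Xn n).orthogonalProjectionOnto (x : X) : X) with hz
    have hzmem : z ∈ Xn n := ((Xn n).orthogonalProjectionOnto (x : X)).2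
    have hxz : ∀ u ∈ Xn n, ⟪(x : X) - z, u⟫_ℂ = 0 :=
      fun u hu => Submodule.starProjection_inner_eq_zero (x : X) u hu
    -- z = 0 by coercivity
    have hz0 : z = 0 := by
      set zd : 𝓗.domain := ⟨z, hsub n hzmem⟩ with hzd
      have hHz : 𝓗 zd ∈ Xn n := hinv n zd hzmem
      have h1 : ⟪z, 𝓗 zd⟫_ℂ = 0 := by
        have h2 := hxz (𝓗 zd) hHz
        have h3 := hxperpH zd
        rw [inner_sub_left] at h2
        rw [h3] at h2
        linear_combination -h2
      obtain ⟨c, hc, hcoe⟩ := hcoer n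
      have h4 := hcoe zd hzmem
      rw [hzd] at h4
      simp only at h4
      rw [h1] at h4
      simp only [Complex.zero_re] at h4
      have hnz : ‖z‖ = 0 := by
        by_contra hne
        have hp : 0 < ‖z‖ ^ 2 := by positivity
        nlinarith
      simpa using norm_eq_zero.mp hnz
    have := hxz w hw
    rw [hz0, sub_zero] at this
    exact this
  -- x is orthogonal to the dense union, hence zero
  have hdir : Directed (· ≤ ·) Xn := hmono.directed_le
  refine hUdense.eq_zero_of_inner_left (𝕜 := ℂ) ?_
  intro v hv
  obtain ⟨n, hn⟩ := (Submodule.mem_iSup_of_directed Xn hdir).mp hv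
  exact hxperp n v hn
end

section
/- Let X be a complex Hilbert space and (Xₙ) an increasing family of closed subspaces with ⋃ₙ Xₙ dense in X; let Pₙ ∈ L(X) be the orthogonal projection onto Xₙ. Let H : D(H) ⊆ X → X be densely defined and linear with H(D(H) ∩ Xₙ) ⊆ Xₙ and PₙH ⊆ HPₙ (i.e., for every x ∈ D(H): Pₙx ∈ D(H) and PₙHx = HPₙx) for all n. For each n let Hₙ : D(H) ∩ Xₙ ⊆ Xₙ → Xₙ, Hₙx = Hx. Then the following are equivalent: (i) H is closable and its closure H̄ is maximal dissipative in X; (ii) for every n, Hₙ is dissipative and the range of 1 − Hₙ is dense in Xₙ. -/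
open scoped InnerProductSpace
open Filter Topology

variable {X : Type*} [NormedAddCommGroup X] [InnerProductSpace ℂ X] [CompleteSpace X]

set_option linter.unusedSectionVars false

private lemma aux_norm_le {v w : X} (h : (⟪w, v⟫_ℂ).re ≤ 0) : ‖v‖ ≤ ‖v - w‖ := by
  have h1 : (⟪v - w, v⟫_ℂ).re ≤ ‖v - w‖ * ‖v‖ := re_inner_le_norm (𝕜 := ℂ) _ _
  have h2 : (⟪v, v⟫_ℂ).re = ‖v‖ ^ 2 := by
    have := inner_self_eq_norm_sq (𝕜 := ℂ) v
    simpa using this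
  have h3 : (⟪v - w, v⟫_ℂ).re = (⟪v, v⟫_ℂ).re - (⟪w, v⟫_ℂ).re := by
    rw [inner_sub_left]; simp
  nlinarith [norm_nonneg v, norm_nonneg (v - w), sq_nonneg (‖v‖ - ‖v - w‖)]

private lemma aux_relim {a b : ℕ → X} {la lb : X}
    (ha : Tendsto a atTop (𝓝 la)) (hb : Tendsto b atTop (𝓝 lb))
    (hle : ∀ k, (⟪a k, b k⟫_ℂ).re ≤ 0) : (⟪la, lb⟫_ℂ).re ≤ 0 := by
  have : Tendsto (fun k => (⟪a k, b k⟫_ℂ).re) atTop (𝓝 (⟪la, lb⟫_ℂ).re) :=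
    (Complex.continuous_re.tendsto _).comp (ha.inner hb)
  exact le_of_tendsto this (Filter.Eventually.of_forall hle)

private lemma aux_cauchy {x b : ℕ → X} (hb : CauchySeq b)
    (hbd : ∀ k j, ‖x k - x j‖ ≤ ‖b k - b j‖) : CauchySeq x := by
  rw [Metric.cauchySeq_iff] at hb ⊢
  intro ε hε
  obtain ⟨N, hN⟩ := hb ε hε
  refine ⟨N, fun m hm n hn => ?_⟩
  have := hN m hm n hn
  rw [dist_eq_norm] at this ⊢
  exact lt_of_le_of_lt (hbd m n) this

/-- Let `(Xₙ)` be an increasing family of closed subspaces of a complex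
Hilbert space `X` with dense union, `Pₙ` the orthogonal projection onto `Xₙ` (characterized
by `Pₙ x ∈ Xₙ` and `x − Pₙ x ⟂ Xₙ`), and `H` a densely defined linear operator which leaves
each `Xₙ` invariant and satisfies `Pₙ H ⊆ H Pₙ`.  Let `Hₙ : D(H) ∩ Xₙ ⊆ Xₙ → Xₙ` be the
restriction of `H`.  Then `H` is closable with maximal dissipative closure if and only if,
for every `n`, `Hₙ` is dissipative and `Range(1 − Hₙ)` is dense in `Xₙ`. -/
theorem stmt_7 (Xn : ℕ → Submodule ℂ X) (hmono : Monotone Xn)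
    (hXnclosed : ∀ n, IsClosed ((Xn n : Submodule ℂ X) : Set X))
    (hUdense : Dense (⋃ n, ((Xn n : Submodule ℂ X) : Set X)))
    (P : ℕ → X →L[ℂ] X) (hPmem : ∀ n x, P n x ∈ Xn n)
    (hPortho : ∀ n x, x - P n x ∈ (Xn n)ᗮ)
    (H : X →ₗ.[ℂ] X) (hdense : Dense (H.domain : Set X))
    (hinv : ∀ (n : ℕ) (x : H.domain), (x : X) ∈ Xn n → H x ∈ Xn n)
    (hcomm : ∀ (n : ℕ) (x : H.domain),
      ∃ h : P n (x : X) ∈ H.domain, H ⟨P n (x : X), h⟩ = P n (H x)) :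
    (H.IsClosable ∧ IsMaximalDissipative H.closure) ↔
      ∀ n : ℕ,
        (∀ x : H.domain, (x : X) ∈ Xn n → (⟪H x, (x : X)⟫_ℂ).re ≤ 0) ∧
        ((Xn n : Set X) ⊆
          closure {y : X | ∃ x : H.domain, (x : X) ∈ Xn n ∧ (x : X) - H x = y}) := by
  -- basic projection facts
  have Pfix : ∀ n (x : X), x ∈ Xn n → P n x = x := by
    intro n x hx
    have h1 : x - P n x ∈ Xn n := sub_mem hx (hPmem n x)
    have h3 : ⟪x - P n x, x - P n x⟫_ℂ = 0 :=
      (Submodule.mem_orthogonal (Xn n) _).mp (hPortho n x) _ h1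
    have h4 : x - P n x = 0 := inner_self_eq_zero.mp h3
    have := sub_eq_zero.mp h4
    exact this.symm
  have Pnorm : ∀ n (x : X), ‖P n x‖ ≤ ‖x‖ := by
    intro n x
    have h0 : ⟪P n x, x - P n x⟫_ℂ = 0 :=
      (Submodule.mem_orthogonal (Xn n) _).mp (hPortho n x) _ (hPmem n x)
    have h1 := norm_add_sq_eq_norm_sq_add_norm_sq_of_inner_eq_zero (𝕜 := ℂ)
      (P n x) (x - P n x) h0
    have h2 : P n x + (x - P n x) = x := by abel
    rw [h2] at h1
    nlinarith [norm_nonneg (x - P n x), norm_nonneg (P n x), norm_nonneg x]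
  have Ptend : ∀ x : X, Tendsto (fun n => P n x) atTop (𝓝 x) := by
    intro x
    rw [Metric.tendsto_atTop]
    intro ε hε
    have hx : x ∈ closure (⋃ n, ((Xn n : Submodule ℂ X) : Set X)) := hUdense x
    rw [Metric.mem_closure_iff] at hx
    obtain ⟨y, hy, hxy⟩ := hx (ε / 2) (by linarith)
    obtain ⟨m, hym⟩ := Set.mem_iUnion.mp hy
    refine ⟨m, fun n hn => ?_⟩
    have hyn : y ∈ Xn n := hmono hn hym
    have heq : P n x - x = P n (x - y) + (y - x) := by
      rw [map_sub, Pfix n y hyn]; abel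
    have hxy' : ‖x - y‖ < ε / 2 := by rwa [dist_eq_norm] at hxy
    calc dist (P n x) x = ‖P n x - x‖ := by rw [dist_eq_norm]
      _ = ‖P n (x - y) + (y - x)‖ := by rw [heq]
      _ ≤ ‖P n (x - y)‖ + ‖y - x‖ := norm_add_le _ _
      _ ≤ ‖x - y‖ + ‖y - x‖ := by gcongr; exact Pnorm n _
      _ < ε := by rw [norm_sub_rev y x]; linarith
  -- graph sequence lemmas
  have hseq : ∀ (hcl : H.IsClosable) (u : H.closure.domain), ∃ s : ℕ → H.domain,
      Tendsto (fun k => ((s k : X))) atTop (𝓝 (u : X)) ∧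
      Tendsto (fun k => H (s k)) atTop (𝓝 (H.closure u)) := by
    intro hcl u
    have hmem : ((u : X), H.closure u) ∈ closure (H.graph : Set (X × X)) := by
      rw [← Submodule.topologicalClosure_coe, hcl.graph_closure_eq_closure_graph]
      exact H.closure.mem_graph u
    obtain ⟨s, hs, hlim⟩ := mem_closure_iff_seq_limit.mp hmem
    choose t ht1 ht2 using fun k => H.mem_graph_iff.mp (hs k)
    refine ⟨t, ?_, ?_⟩
    · have h1 : Tendsto (fun k => (s k).1) atTop (𝓝 (u : X)) :=
        (continuous_fst.tendsto _).comp hlim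
      exact h1.congr fun k => (ht1 k).symm
    · have h2 : Tendsto (fun k => (s k).2) atTop (𝓝 (H.closure u)) :=
        (continuous_snd.tendsto _).comp hlim
      exact h2.congr fun k => (ht2 k).symm
  have hgraphmem : ∀ (hcl : H.IsClosable) (s : ℕ → H.domain) (u w : X),
      Tendsto (fun k => ((s k : X))) atTop (𝓝 u) →
      Tendsto (fun k => H (s k)) atTop (𝓝 w) →
      ∃ hu : u ∈ H.closure.domain, H.closure ⟨u, hu⟩ = w := by
    intro hcl s u w h1 h2
    have hmem : (u, w) ∈ closure (H.graph : Set (X × X)) :=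
      mem_closure_iff_seq_limit.mpr
        ⟨fun k => ((s k : X), H (s k)), fun k => H.mem_graph _, h1.prodMk_nhds h2⟩
    rw [← Submodule.topologicalClosure_coe, hcl.graph_closure_eq_closure_graph] at hmem
    obtain ⟨y, hy1, hy2⟩ := H.closure.mem_graph_iff.mp hmem
    have hy1' : (y : X) = u := hy1
    have hy2' : H.closure y = w := hy2
    refine ⟨hy1' ▸ y.2, ?_⟩
    rw [show (⟨u, hy1' ▸ y.2⟩ : H.closure.domain) = y from Subtype.ext hy1'.symm]
    exact hy2'
  -- commutation of P with the closure
  have hcommc : ∀ (hcl : H.IsClosable) (n : ℕ) (u : H.closure.domain),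
      ∃ h : P n (u : X) ∈ H.closure.domain,
        H.closure ⟨P n (u : X), h⟩ = P n (H.closure u) := by
    intro hcl n u
    obtain ⟨s, h1, h2⟩ := hseq hcl u
    choose m hm using fun k => hcomm n (s k)
    have h1' : Tendsto (fun k => ((⟨P n ((s k : X)), m k⟩ : H.domain) : X)) atTop
        (𝓝 (P n (u : X))) := ((P n).continuous.tendsto _).comp h1
    have h2' : Tendsto (fun k => H (⟨P n ((s k : X)), m k⟩ : H.domain)) atTop
        (𝓝 (P n (H.closure u))) := by
      have := ((P n).continuous.tendsto _).comp h2
      exact this.congr fun k => (hm k).symm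
    exact hgraphmem hcl _ _ _ h1' h2'
  constructor
  · rintro ⟨hcl, hdiss, hmax⟩ n
    have hHdiss : ∀ x : H.domain, (⟪H x, (x : X)⟫_ℂ).re ≤ 0 := by
      intro x
      obtain ⟨y, hy1, hy2⟩ := LinearPMap.exists_of_le H.le_closure x
      rw [hy2, hy1]
      exact hdiss y
    refine ⟨fun x _ => hHdiss x, ?_⟩
    -- dense range of 1 - H.closure
    set Hc := H.closure with hHcdef
    let f : Hc.domain →ₗ[ℂ] X := Hc.domain.subtype - Hc.toFun
    have hfapp : ∀ u : Hc.domain, f u = (u : X) - Hc u := fun u => rfl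
    have hMdense : Dense ((LinearMap.range f : Submodule ℂ X) : Set X) := by
      rw [Submodule.dense_iff_topologicalClosure_eq_top,
        Submodule.topologicalClosure_eq_top_iff]
      by_contra hne
      obtain ⟨z, hzM, hz0⟩ := (Submodule.ne_bot_iff _).mp hne
      have hzinner : ∀ u : Hc.domain, ⟪(u : X) - Hc u, z⟫_ℂ = 0 := fun u =>
        (Submodule.mem_orthogonal _ z).mp hzM _ ⟨u, hfapp u⟩
      have hzdom : z ∉ Hc.domain := by
        intro hz
        have h1 := hzinner ⟨z, hz⟩
        rw [inner_sub_left, sub_eq_zero] at h1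
        have h3 := hdiss ⟨z, hz⟩
        have h2 : (⟪(z : X), z⟫_ℂ).re = ‖z‖ ^ 2 := by
          simpa using inner_self_eq_norm_sq (𝕜 := ℂ) z
        have h5 : ‖z‖ ^ 2 ≤ 0 := by rw [← h2, h1]; exact h3
        have h6 : ‖z‖ = 0 := by nlinarith [norm_nonneg z]
        exact hz0 (norm_eq_zero.mp h6)
      have hKdiss : IsDissipative (Hc.supSpanSingleton z (-z) hzdom) := by
        intro w
        have hw : (w : X) ∈ Hc.domain ⊔ (ℂ ∙ z) := by
          rw [← Hc.domain_supSpanSingleton z (-z) hzdom]; exact w.2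
        obtain ⟨u, hu, v, hv, huv⟩ := Submodule.mem_sup.mp hw
        obtain ⟨c, rfl⟩ := Submodule.mem_span_singleton.mp hv
        have hweq : (w : X) = u + c • z := huv.symm
        have happ : Hc.supSpanSingleton z (-z) hzdom w = Hc ⟨u, hu⟩ + c • (-z) := by
          rw [show w = ⟨u + c • z, Submodule.mem_sup.2
            ⟨u, hu, _, Submodule.mem_span_singleton.2 ⟨c, rfl⟩, rfl⟩⟩ from Subtype.ext hweq]
          exact Hc.supSpanSingleton_apply_mk z (-z) hzdom u hu c
        have hz1 : ⟪(Hc ⟨u, hu⟩ : X), z⟫_ℂ = ⟪(u : X), z⟫_ℂ := by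
          have h0 := hzinner ⟨u, hu⟩
          rw [inner_sub_left, sub_eq_zero] at h0
          exact h0.symm
        rw [happ, hweq]
        have hexp : ⟪(Hc ⟨u, hu⟩ : X) + c • (-z), (u : X) + c • z⟫_ℂ
            = ⟪(Hc ⟨u, hu⟩ : X), (u : X)⟫_ℂ
              + (c * ⟪(u : X), z⟫_ℂ - (starRingEnd ℂ) c * ⟪z, (u : X)⟫_ℂ)
              - (starRingEnd ℂ) c * c * ⟪z, z⟫_ℂ := by
          rw [inner_add_left, inner_add_right, inner_add_right, inner_smul_left,
            inner_smul_left, inner_smul_right, inner_smul_right, inner_neg_left,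
            inner_neg_left, hz1]
          ring
        rw [hexp]
        have hmid : (c * ⟪(u : X), z⟫_ℂ - (starRingEnd ℂ) c * ⟪z, (u : X)⟫_ℂ).re = 0 := by
          have : (starRingEnd ℂ) c * ⟪z, (u : X)⟫_ℂ
              = (starRingEnd ℂ) (c * ⟪(u : X), z⟫_ℂ) := by
            rw [map_mul, inner_conj_symm]
          rw [this, Complex.sub_re, Complex.conj_re, sub_self]
        have hlast : ((starRingEnd ℂ) c * c * ⟪z, z⟫_ℂ).re = Complex.normSq c * ‖z‖ ^ 2 := by
          have hzz_re : (⟪z, z⟫_ℂ).re = ‖z‖ ^ 2 := by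
            simpa using inner_self_eq_norm_sq (𝕜 := ℂ) z
          rw [← Complex.normSq_eq_conj_mul_self, Complex.re_ofReal_mul, hzz_re]
        have hdu := hdiss ⟨u, hu⟩
        rw [Complex.sub_re, Complex.add_re, hmid, hlast]
        have : (0 : ℝ) ≤ Complex.normSq c * ‖z‖ ^ 2 :=
          mul_nonneg (Complex.normSq_nonneg c) (sq_nonneg _)
        linarith
      have hle2 : Hc ≤ Hc.supSpanSingleton z (-z) hzdom := by
        refine ⟨le_sup_left, ?_⟩
        intro x y hxy
        calc Hc x = Hc ⟨(x : X), x.2⟩ + (0 : ℂ) • (-z) := by simp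
          _ = Hc.supSpanSingleton z (-z) hzdom ⟨(x : X) + (0 : ℂ) • z,
              Submodule.mem_sup.2 ⟨x, x.2, _, Submodule.mem_span_singleton.2 ⟨0, rfl⟩, rfl⟩⟩ :=
            (Hc.supSpanSingleton_apply_mk z (-z) hzdom x x.2 0).symm
          _ = Hc.supSpanSingleton z (-z) hzdom y := by
            exact congrArg _ (Subtype.ext (by simp [hxy]))
      have heq := hmax _ hKdiss hle2
      have hzK : z ∈ (Hc.supSpanSingleton z (-z) hzdom).domain := by
        rw [Hc.domain_supSpanSingleton]
        exact Submodule.mem_sup_right (Submodule.mem_span_singleton_self z)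
      rw [heq] at hzK
      exact hzdom hzK
    intro x hx
    have hx' : x ∈ closure (closure
        {y : X | ∃ x : H.domain, (x : X) ∈ Xn n ∧ (x : X) - H x = y}) := by
      rw [Metric.mem_closure_iff]
      intro ε hε
      have hxM := hMdense x
      rw [Metric.mem_closure_iff] at hxM
      obtain ⟨b, hbM, hxb⟩ := hxM (ε / 2) (by linarith)
      obtain ⟨u, hub⟩ := hbM
      rw [hfapp u] at hub
      obtain ⟨hu'mem, hu'val⟩ := hcommc hcl n u
      set u' : Hc.domain := ⟨P n (u : X), hu'mem⟩ with hu'def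
      have hu'Xn : (u' : X) ∈ Xn n := hPmem n _
      have hdist1 : ‖x - ((u' : X) - Hc u')‖ < ε / 2 := by
        have e1 : (u' : X) - Hc u' = P n ((u : X) - Hc u) := by
          rw [map_sub]
          exact congrArg (fun t => P n (u : X) - t) hu'val
        have e2 : x - P n ((u : X) - Hc u) = P n (x - ((u : X) - Hc u)) := by
          rw [map_sub (P n) x ((u : X) - Hc u), Pfix n x hx]
        rw [e1, e2]
        calc ‖P n (x - ((u : X) - Hc u))‖ ≤ ‖x - ((u : X) - Hc u)‖ := Pnorm n _
          _ < ε / 2 := by rw [hub, ← dist_eq_norm]; exact hxb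
      have hb'mem : (u' : X) - Hc u' ∈ closure
          {y : X | ∃ x : H.domain, (x : X) ∈ Xn n ∧ (x : X) - H x = y} := by
        obtain ⟨s, hs1, hs2⟩ := hseq hcl u'
        choose m hm using fun k => hcomm n (s k)
        refine mem_closure_iff_seq_limit.mpr
          ⟨fun k => P n ((s k : X)) - H ⟨P n ((s k : X)), m k⟩,
            fun k => ⟨⟨P n ((s k : X)), m k⟩, hPmem n _, rfl⟩, ?_⟩
        have t1 : Tendsto (fun k => P n ((s k : X))) atTop (𝓝 ((u' : X))) := by
          have := ((P n).continuous.tendsto _).comp hs1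
          rwa [Pfix n _ hu'Xn] at this
        have t2 : Tendsto (fun k => H ⟨P n ((s k : X)), m k⟩) atTop (𝓝 (Hc u')) := by
          have h := ((P n).continuous.tendsto _).comp hs2
          have hfix2 : P n (Hc u') = Hc u' := by
            rw [hu'val]; exact Pfix n _ (hPmem n _)
          rw [hfix2] at h
          exact h.congr fun k => (hm k).symm
        exact t1.sub t2
      exact ⟨(u' : X) - Hc u', hb'mem, by rw [dist_eq_norm]; linarith⟩
    rwa [closure_closure] at hx'
  · intro hyp
    have hHdiss : ∀ x : H.domain, (⟪H x, (x : X)⟫_ℂ).re ≤ 0 := by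
      intro x
      choose m hm using fun k => hcomm k x
      have t1 : Tendsto (fun k => ((⟨P k (x : X), m k⟩ : H.domain) : X)) atTop
          (𝓝 (x : X)) := Ptend _
      have t2 : Tendsto (fun k => H ⟨P k (x : X), m k⟩) atTop (𝓝 (H x)) :=
        (Ptend (H x)).congr fun k => (hm k).symm
      exact aux_relim t2 t1 fun k => (hyp k).1 ⟨P k (x : X), m k⟩ (hPmem k _)
    have hg0 : ∀ (p : X × X), p ∈ H.graph.topologicalClosure → p.1 = 0 → p.2 = 0 := by
      intro p hp hp1
      have hp' : p ∈ closure (H.graph : Set (X × X)) := by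
        rwa [← Submodule.topologicalClosure_coe]
      obtain ⟨s, hs, hlim⟩ := mem_closure_iff_seq_limit.mp hp'
      choose t ht1 ht2 using fun k => H.mem_graph_iff.mp (hs k)
      have l1 : Tendsto (fun k => ((t k : X))) atTop (𝓝 0) := by
        have h := (continuous_fst.tendsto _).comp hlim
        rw [show p.1 = 0 from hp1] at h
        exact h.congr fun k => (ht1 k).symm
      have l2 : Tendsto (fun k => H (t k)) atTop (𝓝 p.2) := by
        have h := (continuous_snd.tendsto _).comp hlim
        exact h.congr fun k => (ht2 k).symm
      have key : ∀ u : H.domain, (⟪p.2, (u : X)⟫_ℂ).re ≤ 0 := by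
        intro u
        have key2 : ∀ t0 : ℝ, 0 < t0 →
            (⟪H u, (u : X)⟫_ℂ).re + t0 * (⟪p.2, (u : X)⟫_ℂ).re ≤ 0 := by
          intro t0 ht0
          have l3 : Tendsto (fun k => (((u + (t0 : ℂ) • t k : H.domain)) : X)) atTop
              (𝓝 ((u : X))) := by
            have : Tendsto (fun k => (u : X) + (t0 : ℂ) • ((t k : X))) atTop
                (𝓝 ((u : X) + (t0 : ℂ) • (0 : X))) :=
              tendsto_const_nhds.add (l1.const_smul _)
            simpa using this
          have l4 : Tendsto (fun k => H (u + (t0 : ℂ) • t k)) atTop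
              (𝓝 (H u + (t0 : ℂ) • p.2)) := by
            have : Tendsto (fun k => H u + (t0 : ℂ) • H (t k)) atTop
                (𝓝 (H u + (t0 : ℂ) • p.2)) := tendsto_const_nhds.add (l2.const_smul _)
            exact this.congr fun k => by rw [H.map_add, H.map_smul]
          have hre := aux_relim l4 l3 fun k => hHdiss (u + (t0 : ℂ) • t k)
          rw [inner_add_left, inner_smul_left, Complex.add_re] at hre
          have : ((starRingEnd ℂ) (t0 : ℂ) * ⟪p.2, (u : X)⟫_ℂ).re
              = t0 * (⟪p.2, (u : X)⟫_ℂ).re := by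
            rw [Complex.conj_ofReal, Complex.re_ofReal_mul]
          rwa [this] at hre
        by_contra hpos
        push_neg at hpos
        have h5 := key2 ((1 + |(⟪H u, (u : X)⟫_ℂ).re|) / (⟪p.2, (u : X)⟫_ℂ).re)
          (by positivity)
        rw [div_mul_cancel₀ _ (ne_of_gt hpos)] at h5
        have := neg_abs_le (⟪H u, (u : X)⟫_ℂ).re
        linarith
      have key3 : ∀ u : H.domain, ⟪p.2, (u : X)⟫_ℂ = 0 := by
        intro u
        have h1 := key ((starRingEnd ℂ) ⟪p.2, (u : X)⟫_ℂ • u)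
        have h2 : (((starRingEnd ℂ) ⟪p.2, (u : X)⟫_ℂ • u : H.domain) : X)
            = (starRingEnd ℂ) ⟪p.2, (u : X)⟫_ℂ • (u : X) := rfl
        rw [h2, inner_smul_right, ← Complex.normSq_eq_conj_mul_self,
          Complex.ofReal_re] at h1
        exact Complex.normSq_eq_zero.mp (le_antisymm h1 (Complex.normSq_nonneg _))
      have hyo : p.2 ∈ H.domainᗮ := by
        rw [Submodule.mem_orthogonal]
        intro u hu
        have h := key3 ⟨u, hu⟩
        rw [← inner_conj_symm, h, map_zero]
      have hdt : H.domainᗮ = ⊥ := Submodule.topologicalClosure_eq_top_iff.mp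
        (Submodule.dense_iff_topologicalClosure_eq_top.mp hdense)
      rw [hdt] at hyo
      simpa using hyo
    have hcl : H.IsClosable :=
      ⟨H.graph.topologicalClosure.toLinearPMap,
        (Submodule.toLinearPMap_graph_eq _ fun p hp hp1 => hg0 p hp hp1).symm⟩
    have hdissC : IsDissipative H.closure := by
      intro u
      obtain ⟨s, h1, h2⟩ := hseq hcl u
      exact aux_relim h2 h1 fun k => hHdiss (s k)
    have hgraphmemc : ∀ (s : ℕ → H.closure.domain) (u w : X),
        Tendsto (fun k => ((s k : X))) atTop (𝓝 u) →
        Tendsto (fun k => H.closure (s k)) atTop (𝓝 w) →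
        ∃ hu : u ∈ H.closure.domain, H.closure ⟨u, hu⟩ = w := by
      intro s u w h1 h2
      have hmem : (u, w) ∈ closure (H.closure.graph : Set (X × X)) :=
        mem_closure_iff_seq_limit.mpr
          ⟨fun k => ((s k : X), H.closure (s k)), fun k => H.closure.mem_graph _,
            h1.prodMk_nhds h2⟩
      have hcls : IsClosed (H.closure.graph : Set (X × X)) := hcl.closure_isClosed
      rw [hcls.closure_eq] at hmem
      obtain ⟨y, hy1, hy2⟩ := H.closure.mem_graph_iff.mp hmem
      have hy1' : (y : X) = u := hy1
      have hy2' : H.closure y = w := hy2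
      refine ⟨hy1' ▸ y.2, ?_⟩
      rw [show (⟨u, hy1' ▸ y.2⟩ : H.closure.domain) = y from Subtype.ext hy1'.symm]
      exact hy2'
    have hsurj : ∀ w : X, ∃ u : H.closure.domain, (u : X) - H.closure u = w := by
      have hXnsub : ∀ n, ∀ y ∈ Xn n,
          ∃ u : H.closure.domain, (u : X) - H.closure u = y := by
        intro n y hy
        have hyc := (hyp n).2 hy
        obtain ⟨b, hb, hblim⟩ := mem_closure_iff_seq_limit.mp hyc
        choose xx hx1 hx2 using hb
        have hxcs : CauchySeq (fun k => ((xx k : X))) := by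
          apply aux_cauchy hblim.cauchySeq
          intro k j
          have hmem : ((xx k - xx j : H.domain) : X) ∈ Xn n := sub_mem (hx1 k) (hx1 j)
          have hle0 := aux_norm_le ((hyp n).1 (xx k - xx j) hmem)
          have e2 : H (xx k - xx j) = H (xx k) - H (xx j) := H.map_sub _ _
          have e1 : ((xx k - xx j : H.domain) : X) = (xx k : X) - (xx j : X) := rfl
          rw [e1, e2] at hle0
          have e3 : (xx k : X) - (xx j : X) - (H (xx k) - H (xx j)) = b k - b j := by
            rw [← hx2 k, ← hx2 j]; abel
          rwa [e3] at hle0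
        obtain ⟨x0, hx0⟩ := cauchySeq_tendsto_of_complete hxcs
        have hH : Tendsto (fun k => H (xx k)) atTop (𝓝 (x0 - y)) := by
          have heq : (fun k => H (xx k)) = fun k => ((xx k : X)) - b k := by
            funext k; rw [← hx2 k]; abel
          rw [heq]
          exact hx0.sub hblim
        obtain ⟨hu, huv⟩ := hgraphmem hcl xx x0 (x0 - y) hx0 hH
        exact ⟨⟨x0, hu⟩, by rw [huv]; abel⟩
      have hTclosed : IsClosed {w : X | ∃ u : H.closure.domain, (u : X) - H.closure u = w} := by
        apply isClosed_of_closure_subset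
        intro w hw
        obtain ⟨b, hb, hblim⟩ := mem_closure_iff_seq_limit.mp hw
        choose uu hu using hb
        have hucs : CauchySeq (fun k => ((uu k : X))) := by
          apply aux_cauchy hblim.cauchySeq
          intro k j
          have hle0 := aux_norm_le (hdissC (uu k - uu j))
          have e2 : H.closure (uu k - uu j) = H.closure (uu k) - H.closure (uu j) :=
            H.closure.map_sub _ _
          have e1 : ((uu k - uu j : H.closure.domain) : X) = (uu k : X) - (uu j : X) := rfl
          rw [e1, e2] at hle0
          have e3 : (uu k : X) - (uu j : X) - (H.closure (uu k) - H.closure (uu j))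
              = b k - b j := by rw [← hu k, ← hu j]; abel
          rwa [e3] at hle0
        obtain ⟨x0, hx0⟩ := cauchySeq_tendsto_of_complete hucs
        have hH : Tendsto (fun k => H.closure (uu k)) atTop (𝓝 (x0 - w)) := by
          have heq : (fun k => H.closure (uu k)) = fun k => ((uu k : X)) - b k := by
            funext k; rw [← hu k]; abel
          rw [heq]
          exact hx0.sub hblim
        obtain ⟨hmem', hval'⟩ := hgraphmemc uu x0 (x0 - w) hx0 hH
        exact ⟨⟨x0, hmem'⟩, by rw [hval']; abel⟩
      intro w
      have hsubT : (⋃ n, ((Xn n : Submodule ℂ X) : Set X)) ⊆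
          {w : X | ∃ u : H.closure.domain, (u : X) - H.closure u = w} := by
        intro y hy
        obtain ⟨n, hn⟩ := Set.mem_iUnion.mp hy
        exact hXnsub n y hn
      have hwT := closure_mono hsubT (hUdense w)
      rwa [hTclosed.closure_eq] at hwT
    refine ⟨hcl, hdissC, ?_⟩
    intro K hK hle
    have hdom : ∀ u : K.domain, ∃ hu : (u : X) ∈ H.closure.domain,
        H.closure ⟨(u : X), hu⟩ = K u := by
      intro u
      obtain ⟨v, hv⟩ := hsurj ((u : X) - K u)
      obtain ⟨v', hvv', hKv'⟩ := LinearPMap.exists_of_le hle v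
      have hzero : ((u - v' : K.domain) : X) - K (u - v') = 0 := by
        have e2 : K (u - v') = K u - K v' := K.map_sub _ _
        have e1 : ((u - v' : K.domain) : X) = (u : X) - (v' : X) := rfl
        rw [e1, e2, ← hKv', ← hvv']
        have e4 : (u : X) - (v : X) - (K u - H.closure v)
            = ((u : X) - K u) - ((v : X) - H.closure v) := by abel
        rw [e4, ← hv, sub_self]
      have hnorm := aux_norm_le (hK (u - v'))
      rw [hzero, norm_zero] at hnorm
      have huv : ((u - v' : K.domain) : X) = 0 := norm_le_zero_iff.mp hnorm
      have huv' : (u : X) = (v' : X) := sub_eq_zero.mp huv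
      have humem : (u : X) ∈ H.closure.domain := by
        rw [huv', ← hvv']; exact v.2
      refine ⟨humem, ?_⟩
      have e1 : (⟨(u : X), humem⟩ : H.closure.domain) = v :=
        Subtype.ext (by rw [huv', hvv'])
      rw [e1, hKv']
      exact congrArg K (Subtype.ext (by rw [huv']))
    have hKle : K ≤ H.closure := by
      refine ⟨fun x hx => (hdom ⟨x, hx⟩).1, ?_⟩
      intro x y hxy
      obtain ⟨hu, hval⟩ := hdom x
      rw [← hval]
      exact congrArg H.closure (Subtype.ext hxy)
    exact le_antisymm hKle hle
end

section
/- Let X be a complex Hilbert space and H : D(H) ⊆ X → X linear and densely defined. Then the following are equivalent: (i) H is dissipative and the range of 1 − H (i.e., {x − Hx : x ∈ D(H)}) is dense in X; (ii) H is closable and its closure H̄ is maximal dissipative. -/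
open scoped InnerProductSpace

variable {X : Type*} [NormedAddCommGroup X] [InnerProductSpace ℂ X] [CompleteSpace X]

set_option linter.unusedSectionVars false

lemma diss_norm {H : X →ₗ.[ℂ] X} (h : IsDissipative H) (x : H.domain) :
    ‖(x : X)‖ ≤ ‖(x : X) - H x‖ := by
  rcases eq_or_lt_of_le (norm_nonneg (x : X)) with h0 | h0
  · rw [← h0]; exact norm_nonneg _
  have h1 : ‖(x : X)‖ * ‖(x : X)‖ ≤ (⟪(x : X) - H x, (x : X)⟫_ℂ).re := by
    rw [inner_sub_left]
    have := h x
    have h2 : (⟪(x : X), (x : X)⟫_ℂ).re = ‖(x : X)‖ * ‖(x : X)‖ := by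
      rw [← RCLike.re_to_complex, inner_self_eq_norm_mul_norm]
    simp only [Complex.sub_re]
    linarith
  have h3 : (⟪(x : X) - H x, (x : X)⟫_ℂ).re ≤ ‖(x : X) - H x‖ * ‖(x : X)‖ :=
    by simpa only [RCLike.re_to_complex] using re_inner_le_norm (𝕜 := ℂ) ((x : X) - H x) (x : X)
  have := h1.trans h3
  exact le_of_mul_le_mul_right this h0

lemma graph_cond {H : X →ₗ.[ℂ] X} (hdense : Dense (H.domain : Set X))
    (h : IsDissipative H) :
    ∀ (p : X × X) (_ : p ∈ H.graph.topologicalClosure) (_ : p.1 = 0), p.2 = 0 := by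
  rintro ⟨a, y⟩ hp (rfl : a = 0)
  -- step 1: ∀ u : H.domain, Re ⟪y, u⟫ ≤ 0
  have key : ∀ u : H.domain, (⟪y, (u : X)⟫_ℂ).re ≤ 0 := by
    intro u
    have step : ∀ t : ℝ, 0 < t → t * (⟪y, (u : X)⟫_ℂ).re + t^2 * (⟪H u, (u : X)⟫_ℂ).re ≤ 0 := by
      intro t ht
      have hC : IsClosed {p : X × X |
          (⟪p.2 + (t : ℂ) • H u, p.1 + (t : ℂ) • (u : X)⟫_ℂ).re ≤ 0} := by
        apply IsClosed.preimage ?_ (isClosed_Iic (a := (0:ℝ)))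
        exact (Complex.continuous_re.comp
          ((continuous_snd.add continuous_const).inner (continuous_fst.add continuous_const)))
      have hsub : (H.graph : Set (X × X)) ⊆ {p : X × X |
          (⟪p.2 + (t : ℂ) • H u, p.1 + (t : ℂ) • (u : X)⟫_ℂ).re ≤ 0} := by
        rintro ⟨a, b⟩ hab
        rw [SetLike.mem_coe, LinearPMap.mem_graph_iff] at hab
        obtain ⟨z, hz1, hz2⟩ := hab
        subst hz1; subst hz2
        have := h (z + (t : ℂ) • u)
        rw [H.map_add, H.map_smul] at this
        simpa using this
      have hmem : ((0 : X), y) ∈ {p : X × X |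
          (⟪p.2 + (t : ℂ) • H u, p.1 + (t : ℂ) • (u : X)⟫_ℂ).re ≤ 0} := by
        have h1 : (H.graph.topologicalClosure : Set (X × X)) ⊆ _ :=
          closure_minimal hsub hC
        rw [Submodule.topologicalClosure_coe] at h1
        exact h1 hp
      have hexp : (⟪y + (t : ℂ) • H u, (0 : X) + (t : ℂ) • (u : X)⟫_ℂ).re
          = t * (⟪y, (u : X)⟫_ℂ).re + t^2 * (⟪H u, (u : X)⟫_ℂ).re := by
        simp only [inner_add_left, inner_smul_left, inner_smul_right, Complex.conj_ofReal, zero_add,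
          Complex.re_ofReal_mul, Complex.add_re]
        ring
      rw [← hexp]; exact hmem
    by_contra hpos
    push_neg at hpos
    set c := (⟪y, (u : X)⟫_ℂ).re with hc
    set d := (⟪H u, (u : X)⟫_ℂ).re with hd
    have hd0 : d ≤ 0 := h u
    -- choose t small
    rcases eq_or_lt_of_le hd0 with hd' | hd'
    · have := step 1 one_pos
      rw [← hd'] at this; simp at this; linarith
    · have hnd : 0 < -d := by linarith
      set t := c / (2 * (-d)) with htdef
      have ht0 : 0 < t := by positivity
      have hstep := step t ht0
      have htd : t ^ 2 * d = -(t * (c / 2)) := by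
        have hdne : d ≠ 0 := ne_of_lt hd'
        rw [htdef]; field_simp
      rw [htd] at hstep
      have := mul_pos ht0 hpos
      linarith
  -- step 2: ⟪y, u⟫ = 0 for u in domain
  have key2 : ∀ u ∈ H.domain, ⟪y, u⟫_ℂ = 0 := by
    intro u hu
    have h1 := key ⟨u, hu⟩
    have h2 := key (-⟨u, hu⟩)
    have h3 := key ((Complex.I) • ⟨u, hu⟩)
    have h4 := key (-(Complex.I) • ⟨u, hu⟩)
    simp only [Submodule.coe_neg, Submodule.coe_smul, inner_neg_right, inner_smul_right,
      Complex.neg_re, Complex.mul_re, Complex.I_re, Complex.I_im, neg_smul] at h1 h2 h3 h4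
    apply Complex.ext <;> simp <;> linarith
  -- step 3: y = 0
  have hcont : Continuous fun v : X => ⟪y, v⟫_ℂ := continuous_const.inner continuous_id
  have : (fun v : X => ⟪y, v⟫_ℂ) y = 0 := by
    have := Continuous.ext_on hdense hcont continuous_const
      (fun u hu => key2 u hu)
    exact congrFun this y
  simpa [inner_self_eq_zero] using this

lemma diss_closable {H : X →ₗ.[ℂ] X} (hdense : Dense (H.domain : Set X))
    (h : IsDissipative H) : H.IsClosable :=
  ⟨H.graph.topologicalClosure.toLinearPMap,
    (Submodule.toLinearPMap_graph_eq _ (graph_cond hdense h)).symm⟩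

lemma diss_mono {H K : X →ₗ.[ℂ] X} (h : H ≤ K) (hK : IsDissipative K) :
    IsDissipative H := by
  intro x
  obtain ⟨y, hy1, hy2⟩ := LinearPMap.exists_of_le h x
  rw [hy2, hy1]
  exact hK y

lemma closure_diss {H : X →ₗ.[ℂ] X} (hc : H.IsClosable) (h : IsDissipative H) :
    IsDissipative H.closure := by
  intro x
  have hmem : ((x : X), H.closure x) ∈ H.closure.graph := H.closure.mem_graph x
  rw [← hc.graph_closure_eq_closure_graph] at hmem
  have hsub : (H.graph : Set (X × X)) ⊆ {p : X × X | (⟪p.2, p.1⟫_ℂ).re ≤ 0} := by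
    rintro ⟨a, b⟩ hab
    rw [SetLike.mem_coe, LinearPMap.mem_graph_iff] at hab
    obtain ⟨z, hz1, hz2⟩ := hab
    subst hz1; subst hz2
    exact h z
  have hC : IsClosed {p : X × X | (⟪p.2, p.1⟫_ℂ).re ≤ 0} :=
    IsClosed.preimage (Complex.continuous_re.comp (continuous_snd.inner continuous_fst))
      (isClosed_Iic (a := (0:ℝ)))
  have h1 : (H.graph.topologicalClosure : Set (X × X)) ⊆ _ := closure_minimal hsub hC
  rw [Submodule.topologicalClosure_coe] at h1
  exact h1 hmem

-- range set of (1 - F)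

lemma range_closed {F : X →ₗ.[ℂ] X} (hFc : F.IsClosed) (hF : IsDissipative F)
    (hnorm : ∀ x : F.domain, ‖(x : X)‖ ≤ ‖(x : X) - F x‖) :
    IsClosed {y : X | ∃ x : F.domain, (x : X) - F x = y} := by
  apply IsSeqClosed.isClosed
  intro yseq y hyS hy
  choose xseq hx using hyS
  have hycs : CauchySeq yseq := hy.cauchySeq
  have hxcs : CauchySeq fun n => (xseq n : X) := by
    rw [Metric.cauchySeq_iff] at hycs ⊢
    intro ε hε
    obtain ⟨N, hN⟩ := hycs ε hε
    refine ⟨N, fun m hm n hn => ?_⟩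
    have h1 := hnorm (xseq m - xseq n)
    simp only [dist_eq_norm] at hN ⊢
    calc ‖(xseq m : X) - (xseq n : X)‖ = ‖((xseq m - xseq n : F.domain) : X)‖ := by
          norm_cast
      _ ≤ ‖((xseq m - xseq n : F.domain) : X) - F (xseq m - xseq n)‖ := h1
      _ = ‖yseq m - yseq n‖ := by
          rw [F.map_sub]; push_cast
          rw [← hx m, ← hx n]; congr 1; abel
      _ < ε := hN m hm n hn
  obtain ⟨x, hxlim⟩ := cauchySeq_tendsto_of_complete hxcs
  have hFlim : Filter.Tendsto (fun n => F (xseq n)) Filter.atTop (nhds (x - y)) := by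
    have : ∀ n, (F (xseq n) : X) = (xseq n : X) - yseq n := fun n => by
      rw [← hx n]; abel
    simp_rw [this]
    exact hxlim.sub hy
  have hpair : Filter.Tendsto (fun n => ((xseq n : X), F (xseq n))) Filter.atTop
      (nhds (x, x - y)) := hxlim.prodMk_nhds hFlim
  have hmem : (x, x - y) ∈ F.graph :=
    hFc.mem_of_tendsto hpair (Filter.Eventually.of_forall fun n => F.mem_graph (xseq n))
  rw [LinearPMap.mem_graph_iff] at hmem
  obtain ⟨z, hz1, hz2⟩ := hmem
  exact ⟨z, by rw [hz1, hz2]; simp⟩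

lemma max_of_surj {F : X →ₗ.[ℂ] X} (hF : IsDissipative F)
    (hnorm : ∀ K : X →ₗ.[ℂ] X, IsDissipative K → ∀ x : K.domain, ‖(x : X)‖ ≤ ‖(x : X) - K x‖)
    (hsurj : ∀ v : X, ∃ z : F.domain, (z : X) - F z = v) :
    IsMaximalDissipative F := by
  refine ⟨hF, fun K hK hle => ?_⟩
  have hdom : K.domain ≤ F.domain := by
    intro a ha
    obtain ⟨z, hz⟩ := hsurj ((a : X) - K ⟨a, ha⟩)
    obtain ⟨w, hw1, hw2⟩ := LinearPMap.exists_of_le hle z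
    have hdiff : ((⟨a, ha⟩ - w : K.domain) : X) - K (⟨a, ha⟩ - w) = 0 := by
      rw [K.map_sub]
      push_cast
      rw [← hw1, ← hw2]
      have h3 : a - (z : X) - ((K ⟨a, ha⟩ : X) - F z)
          = (a - K ⟨a, ha⟩) - ((z : X) - F z) := by abel
      rw [h3, ← hz, sub_self]
    have h0 := hnorm K hK (⟨a, ha⟩ - w)
    rw [hdiff] at h0
    simp only [norm_zero] at h0
    have h1 : ((⟨a, ha⟩ - w : K.domain) : X) = 0 := norm_le_zero_iff.mp h0
    have haw : a = (w : X) := sub_eq_zero.mp (by push_cast at h1 ⊢; exact h1)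
    rw [haw, ← hw1]
    exact z.2
  have hKF : K ≤ F := by
    refine ⟨hdom, fun x y hxy => ?_⟩
    obtain ⟨w, hw1, hw2⟩ := LinearPMap.exists_of_le hle y
    rw [hw2]
    congr 1
    exact Subtype.ext (hxy.trans hw1)
  exact LinearPMap.eq_of_le_of_domain_eq hKF (le_antisymm hdom hle.1)

lemma dense_range_of_max {F : X →ₗ.[ℂ] X} (hmax : IsMaximalDissipative F) :
    Dense {y : X | ∃ x : F.domain, (x : X) - F x = y} := by
  set U : Submodule ℂ X := LinearMap.range (F.domain.subtype - F.toFun) with hU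
  have hUset : (U : Set X) = {y : X | ∃ x : F.domain, (x : X) - F x = y} := by
    ext v
    simp [hU, LinearMap.mem_range, LinearMap.sub_apply, Submodule.coe_subtype]
  rw [← hUset]
  by_contra hnd
  have hUne : Uᗮ ≠ ⊥ := by
    intro hbot
    have h1 : Uᗮᗮ = U.topologicalClosure := Submodule.orthogonal_orthogonal_eq_closure U
    rw [hbot, Submodule.bot_orthogonal_eq_top] at h1
    exact hnd (Submodule.dense_iff_topologicalClosure_eq_top.mpr h1.symm)
  obtain ⟨y, hyU, hy0⟩ := Submodule.ne_bot_iff _ |>.mp hUne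
  have horth : ∀ x : F.domain, ⟪(x : X) - F x, y⟫_ℂ = 0 := by
    intro x
    apply (Submodule.mem_orthogonal U y).mp hyU
    rw [← SetLike.mem_coe, hUset]
    exact ⟨x, rfl⟩
  have hynd : y ∉ F.domain := by
    intro hmem
    have h1 := horth ⟨y, hmem⟩
    rw [inner_sub_left, sub_eq_zero] at h1
    have h2 : (⟪y, y⟫_ℂ).re ≤ 0 := by
      rw [h1]; exact hmax.1 ⟨y, hmem⟩
    rw [← RCLike.re_to_complex, inner_self_eq_norm_mul_norm] at h2
    have : ‖y‖ = 0 := by nlinarith [norm_nonneg y]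
    exact hy0 (norm_eq_zero.mp this)
  set K := F.supSpanSingleton y (-y) hynd with hKdef
  have hKdiss : IsDissipative K := by
    intro w
    obtain ⟨a, ha, b, hb, hab⟩ := Submodule.mem_sup.1 w.2
    obtain ⟨c, rfl⟩ := Submodule.mem_span_singleton.1 hb
    have hw : w = ⟨a + c • y,
        Submodule.mem_sup.2 ⟨a, ha, _, Submodule.mem_span_singleton.2 ⟨c, rfl⟩, rfl⟩⟩ :=
      Subtype.ext hab.symm
    rw [hw, LinearPMap.supSpanSingleton_apply_mk]
    set b' := (F ⟨a, ha⟩ : X) with hb'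
    have hinner : ⟪a, y⟫_ℂ = ⟪b', y⟫_ℂ := by
      have := horth ⟨a, ha⟩
      rwa [inner_sub_left, sub_eq_zero] at this
    have h1 : ⟪b' + c • (-y), a + c • y⟫_ℂ
        = ⟪b', a⟫_ℂ + (c * ⟪b', y⟫_ℂ - (starRingEnd ℂ) (c * ⟪a, y⟫_ℂ))
          - (starRingEnd ℂ) c * c * ⟪y, y⟫_ℂ := by
      simp only [inner_add_left, inner_add_right, inner_smul_left, inner_smul_right,
        inner_neg_left, map_mul]
      rw [← inner_conj_symm a y]
      simp only [Complex.conj_conj]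
      ring
    show (⟪b' + c • (-y), a + c • y⟫_ℂ).re ≤ 0; rw [h1, ← hinner]
    simp only [Complex.add_re, Complex.sub_re, Complex.conj_re]
    have h2 : ((starRingEnd ℂ) c * c * ⟪y, y⟫_ℂ).re = Complex.normSq c * (⟪y, y⟫_ℂ).re := by
      rw [mul_comm ((starRingEnd ℂ) c) c, Complex.mul_conj]
      exact Complex.re_ofReal_mul _ _
    rw [h2]
    have h3 : (⟪b', a⟫_ℂ).re ≤ 0 := hmax.1 ⟨a, ha⟩
    have h4 : 0 ≤ (⟪y, y⟫_ℂ).re := by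
      rw [← RCLike.re_to_complex, inner_self_eq_norm_mul_norm]
      positivity
    nlinarith [Complex.normSq_nonneg c]
    exact ha
  have hFK : F ≤ K := by
    refine ⟨le_sup_left, fun x z hxz => ?_⟩
    have hz : z = ⟨(x : X) + (0 : ℂ) • y,
        Submodule.mem_sup.2 ⟨(x : X), x.2, _, Submodule.mem_span_singleton.2 ⟨0, rfl⟩, rfl⟩⟩ :=
      Subtype.ext (by simp [← hxz])
    rw [hz, LinearPMap.supSpanSingleton_apply_mk]
    · simp
    · exact x.2
  have hKF := hmax.2 K hKdiss hFK
  apply hynd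
  have hyK : y ∈ K.domain := by
    apply Submodule.mem_sup_right
    exact Submodule.mem_span_singleton_self y
  rwa [hKF] at hyK

lemma closure_range_subset {H : X →ₗ.[ℂ] X} (hc : H.IsClosable) :
    {y : X | ∃ x : H.closure.domain, (x : X) - H.closure x = y} ⊆
      closure {y : X | ∃ x : H.domain, (x : X) - H x = y} := by
  rintro v ⟨x, rfl⟩
  have hmem : ((x : X), H.closure x) ∈ closure (H.graph : Set (X × X)) := by
    have h1 := H.closure.mem_graph x
    rw [← hc.graph_closure_eq_closure_graph] at h1
    rw [← Submodule.topologicalClosure_coe]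
    exact h1
  have hcont : Continuous fun p : X × X => p.1 - p.2 := continuous_fst.sub continuous_snd
  have himg := image_closure_subset_closure_image (s := (H.graph : Set (X × X))) (f := fun p : X × X => p.1 - p.2) hcont
  have hv : (x : X) - H.closure x ∈
      closure ((fun p : X × X => p.1 - p.2) '' (H.graph : Set (X × X))) :=
    himg ⟨_, hmem, rfl⟩
  refine closure_mono ?_ hv
  rintro w ⟨⟨a, b⟩, hab, rfl⟩
  rw [SetLike.mem_coe, LinearPMap.mem_graph_iff] at hab
  obtain ⟨z, hz1, hz2⟩ := hab
  exact ⟨z, by rw [hz1, hz2]⟩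

/-- For a linear, densely defined operator `H` in a complex Hilbert space,
the following are equivalent: (i) `H` is dissipative and the range of `1 − H` is dense in
`X`; (ii) `H` is closable and its closure is maximal dissipative. -/
theorem stmt_8 (H : X →ₗ.[ℂ] X) (hdense : Dense (H.domain : Set X)) :
    (IsDissipative H ∧ Dense {y : X | ∃ x : H.domain, (x : X) - H x = y}) ↔
      (H.IsClosable ∧ IsMaximalDissipative H.closure) := by
  constructor
  · rintro ⟨hdiss, hran⟩
    have hc : H.IsClosable := diss_closable hdense hdiss
    have hcd : IsDissipative H.closure := closure_diss hc hdiss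
    refine ⟨hc, ?_⟩
    have hclosed : IsClosed {y : X | ∃ x : H.closure.domain, (x : X) - H.closure x = y} :=
      range_closed hc.closure_isClosed hcd (diss_norm hcd)
    have hsub : {y : X | ∃ x : H.domain, (x : X) - H x = y} ⊆
        {y : X | ∃ x : H.closure.domain, (x : X) - H.closure x = y} := by
      rintro v ⟨x, rfl⟩
      obtain ⟨w, hw1, hw2⟩ := LinearPMap.exists_of_le H.le_closure x
      exact ⟨w, by rw [← hw1, ← hw2]⟩
    have hdense2 : Dense {y : X | ∃ x : H.closure.domain, (x : X) - H.closure x = y} :=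
      hran.mono hsub
    have hsurj : ∀ v : X, ∃ z : H.closure.domain, (z : X) - H.closure z = v := by
      intro v
      have huniv : {y : X | ∃ x : H.closure.domain, (x : X) - H.closure x = y} = Set.univ := by
        rw [← hclosed.closure_eq, hdense2.closure_eq]
      exact Set.eq_univ_iff_forall.mp huniv v
    exact max_of_surj hcd (fun K hK => diss_norm hK) hsurj
  · rintro ⟨hc, hmax⟩
    refine ⟨diss_mono H.le_closure hmax.1, ?_⟩
    have h1 := dense_range_of_max hmax
    have h2 := closure_range_subset hc
    rw [← dense_closure]
    exact h1.mono h2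
end

section
/- Let X be a complex Hilbert space, (Xₙ) an increasing sequence of closed subspaces of X with ⋃ₙ Xₙ dense, Pₙ the orthogonal projection onto Xₙ and Qₙ = 1 − Pₙ. Let H : D(H) ⊆ X → X be densely defined and linear, and fix n. Assume (A1): the operator x ↦ H*(Pₙx), with domain {x ∈ X : Pₙx ∈ D(H*)}, is densely defined; and (A2): for every x ∈ D(H) and every ε > 0 there exists z ∈ Qₙ[D(H)] with ‖z‖ ≤ ε, Pₙx + z ∈ D(H) and Pₙ(H(Pₙx + z) − Hx) = 0. Then the operator Hₙ : Pₙ[D(H)] ⊆ Xₙ → Xₙ defined by Hₙ(Pₙx) := Pₙ(Hx) for x ∈ D(H) is well-defined (i.e., Pₙx = Pₙy for x, y ∈ D(H) implies PₙHx = PₙHy), and Hₙ is densely defined in Xₙ. -/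
open scoped InnerProductSpace

variable {X : Type*} [NormedAddCommGroup X] [InnerProductSpace ℂ X] [CompleteSpace X]

/-- Let `(Xₙ)` be an increasing sequence of closed subspaces of a complex
Hilbert space with dense union, `Pₙ` the orthogonal projection onto `Xₙ` and `Qₙ = 1 − Pₙ`,
and `H` densely defined.  Fix `n` and assume
(A1) the operator `x ↦ H* (Pₙ x)` with domain `{x : Pₙ x ∈ D(H*)}` is densely defined; and
(A2) for every `x ∈ D(H)` and `ε > 0` there is `z ∈ Qₙ[D(H)]` with `‖z‖ ≤ ε`,
`Pₙ x + z ∈ D(H)` and `Pₙ (H (Pₙ x + z) − H x) = 0`.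
Then `Hₙ : Pₙ[D(H)] ⊆ Xₙ → Xₙ`, `Hₙ (Pₙ x) := Pₙ (H x)`, is well defined and densely
defined in `Xₙ`. -/
theorem stmt_17 (Xn : ℕ → Submodule ℂ X) (hmono : Monotone Xn)
    (hXnclosed : ∀ m, IsClosed ((Xn m : Submodule ℂ X) : Set X))
    (hUdense : Dense (⋃ m, ((Xn m : Submodule ℂ X) : Set X)))
    (P Q : ℕ → X →L[ℂ] X) (hPmem : ∀ m x, P m x ∈ Xn m)
    (hPortho : ∀ m x, x - P m x ∈ (Xn m)ᗮ)
    (hQ : ∀ m x, Q m x = x - P m x)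
    (H : X →ₗ.[ℂ] X) (hdense : Dense (H.domain : Set X))
    (n : ℕ)
    (hA1 : Dense {x : X | P n x ∈ H.adjoint.domain})
    (hA2 : ∀ (x : H.domain) (ε : ℝ), 0 < ε → ∃ w : H.domain,
      ‖Q n (w : X)‖ ≤ ε ∧ ∃ hz : P n (x : X) + Q n (w : X) ∈ H.domain,
        P n (H ⟨P n (x : X) + Q n (w : X), hz⟩ - H x) = 0) :
    (∀ x y : H.domain, P n (x : X) = P n (y : X) → P n (H x) = P n (H y)) ∧
      ((Xn n : Set X) ⊆ closure {v : X | ∃ x : H.domain, P n (x : X) = v}) := by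
  -- self-adjointness of the projection
  have hPsa : ∀ a b : X, ⟪P n a, b⟫_ℂ = ⟪a, P n b⟫_ℂ := by
    intro a b
    have h1 : ⟪P n a, b - P n b⟫_ℂ = 0 :=
      Submodule.inner_right_of_mem_orthogonal (hPmem n a) (hPortho n b)
    have h2 : ⟪a - P n a, P n b⟫_ℂ = 0 :=
      Submodule.inner_left_of_mem_orthogonal (hPmem n b) (hPortho n a)
    have e1 : ⟪P n a, b⟫_ℂ = ⟪P n a, P n b⟫_ℂ := by
      have := inner_sub_right (𝕜 := ℂ) (P n a) b (P n b)
      rw [h1] at this; exact sub_eq_zero.mp this.symm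
    have e2 : ⟪a, P n b⟫_ℂ = ⟪P n a, P n b⟫_ℂ := by
      have := inner_sub_left (𝕜 := ℂ) a (P n a) (P n b)
      rw [h2] at this; exact sub_eq_zero.mp this.symm
    rw [e1, e2]
  constructor
  · intro x y hxy
    set u : H.domain := x - y with hu
    have hPu : P n (u : X) = 0 := by
      simp [hu, map_sub, hxy]
    -- it suffices to show `P n (H u) = 0`
    have key : P n (H u) = 0 := by
      -- the inner product against any `v` with `P n v ∈ D(H†)` vanishes
      have hv0 : ∀ v ∈ {x : X | P n x ∈ H.adjoint.domain}, ⟪v, P n (H u)⟫_ℂ = 0 := by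
        intro v hv
        set pv : H.adjoint.domain := ⟨P n v, hv⟩ with hpv
        have hbound : ∀ ε : ℝ, 0 < ε → ‖⟪v, P n (H u)⟫_ℂ‖ ≤ ‖(H.adjoint pv : X)‖ * ε := by
          intro ε hε
          obtain ⟨w, hwnorm, hz, hPz⟩ := hA2 u ε hε
          set z : H.domain := ⟨P n (u : X) + Q n (w : X), hz⟩ with hzdef
          have hznorm : ‖(z : X)‖ ≤ ε := by
            simp only [hzdef, hPu, zero_add]
            exact hwnorm
          have hPHz : P n (H z) = P n (H u) := by
            rw [map_sub, sub_eq_zero] at hPz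
            exact hPz
          have hadj : ⟪H.adjoint pv, (z : X)⟫_ℂ = ⟪(pv : X), H z⟫_ℂ :=
            LinearPMap.adjoint_isFormalAdjoint hdense pv z
          calc ‖⟪v, P n (H u)⟫_ℂ‖ = ‖⟪v, P n (H z)⟫_ℂ‖ := by rw [hPHz]
            _ = ‖⟪P n v, H z⟫_ℂ‖ := by rw [← hPsa v (H z)]
            _ = ‖⟪(H.adjoint pv : X), (z : X)⟫_ℂ‖ := by
                have h' : ⟪P n v, H z⟫_ℂ = ⟪(H.adjoint pv : X), (z : X)⟫_ℂ := hadj.symm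
                rw [h']
            _ ≤ ‖(H.adjoint pv : X)‖ * ‖(z : X)‖ := norm_inner_le_norm _ _
            _ ≤ ‖(H.adjoint pv : X)‖ * ε := by
                exact mul_le_mul_of_nonneg_left hznorm (norm_nonneg _)
        have : ‖⟪v, P n (H u)⟫_ℂ‖ ≤ 0 := by
          refine le_of_forall_pos_le_add ?_
          intro δ hδ
          set C : ℝ := ‖(H.adjoint pv : X)‖ with hC
          have hCpos : 0 < C + 1 := by positivity
          have hεpos : 0 < δ / (C + 1) := by positivity
          have h1 := hbound _ hεpos
          have h2 : C * (δ / (C + 1)) ≤ (C + 1) * (δ / (C + 1)) := by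
            apply mul_le_mul_of_nonneg_right (by linarith) (le_of_lt hεpos)
          have h3 : (C + 1) * (δ / (C + 1)) = δ := by field_simp
          rw [zero_add]
          linarith
        have := le_antisymm this (norm_nonneg _)
        exact norm_eq_zero.mp this
      -- extend to all `v` by density
      have hall : ∀ v : X, ⟪v, P n (H u)⟫_ℂ = 0 := by
        have hc : Continuous fun v : X => ⟪v, P n (H u)⟫_ℂ := by
          exact Continuous.inner continuous_id continuous_const
        have heq : Set.EqOn (fun v : X => ⟪v, P n (H u)⟫_ℂ) (fun _ => (0 : ℂ))
            (closure {x : X | P n x ∈ H.adjoint.domain}) :=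
          Set.EqOn.closure (fun v hv => hv0 v hv) hc continuous_const
        intro v
        have : v ∈ closure {x : X | P n x ∈ H.adjoint.domain} := hA1 v
        exact heq this
      have := hall (P n (H u))
      exact inner_self_eq_zero.mp this
    have : P n (H u) = P n (H x) - P n (H y) := by
      rw [hu, H.map_sub, map_sub]
    rw [this] at key
    exact sub_eq_zero.mp key
  · -- density
    intro v hv
    -- `P n v = v` for `v ∈ Xn n`
    have hPv : P n v = v := by
      have hmem : v - P n v ∈ Xn n := Submodule.sub_mem _ hv (hPmem n v)
      have : ⟪v - P n v, v - P n v⟫_ℂ = 0 :=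
        Submodule.inner_left_of_mem_orthogonal hmem (hPortho n v)
      have := inner_self_eq_zero.mp this
      rw [sub_eq_zero] at this
      exact this.symm
    have hset : (fun x : X => P n x) '' (H.domain : Set X) ⊆
        {v : X | ∃ x : H.domain, P n (x : X) = v} := by
      rintro _ ⟨x, hx, rfl⟩
      exact ⟨⟨x, hx⟩, rfl⟩
    have : v ∈ (fun x : X => P n x) '' closure (H.domain : Set X) := by
      exact ⟨v, hdense v, hPv⟩
    have h2 : v ∈ closure ((fun x : X => P n x) '' (H.domain : Set X)) :=
      image_closure_subset_closure_image (P n).continuous this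
    exact closure_mono hset h2
end
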